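/- arXiv:2602.16761 — 5 statements merged into one kernel-verified Lean document; each statement's English description precedes it below -/
import Mathlib

section
/- For every integer n ≥ 1, the coefficient of x^{2n−2} in Ξ_n equals (−1)^{n+1}/2^{2n} and the coefficient of x^{2n−2} in Λ_n equals (−1)^{n+1}/(2^{2n+1}−1); equivalently, C^B_{n,n−1} = 2^{2n−2}(2n−1)! and C^A_{n,n−1} = (2n)!/2. In particular both polynomials have degree exactly 2n−2. -/
open Finset

/-- Type A Eulerian number ⟨m,k⟩. -/
def eulerianA (m k : ℕ) : ℤ :=
  ∑ j ∈ Finset.range (k + 1),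
    (-1 : ℤ) ^ j * (Nat.choose (m + 1) j) * ((k + 1 - j : ℕ) ^ m : ℤ)

/-- Type B Eulerian number ⟨m,k⟩^B. -/
def eulerianB (m k : ℕ) : ℤ :=
  ∑ j ∈ Finset.range (k + 1),
    (-1 : ℤ) ^ j * (Nat.choose (m + 1) j) * ((2 * (k - j) + 1 : ℕ) ^ m : ℤ)

/-- Inner sum Σ_{i=0}^{k} (−1)^i binom(k,i) binom(2n−2k−1, 2t−2i+1), with the
convention that the binomial vanishes when the lower index is negative. -/
def innerSum (n k t : ℕ) : ℤ :=
  ∑ i ∈ Finset.range (k + 1),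
    if i ≤ t then
      (-1 : ℤ) ^ i * (Nat.choose k i) * (Nat.choose (2 * n - 2 * k - 1) (2 * (t - i) + 1))
    else 0

/-- Coefficient C^B_{n,t}. -/
def CB (n t : ℕ) : ℤ :=
  ∑ k ∈ Finset.range n, eulerianB (2 * n - 1) k * (-1) ^ k * innerSum n k t

/-- Coefficient C^A_{n,t}. -/
def CA (n t : ℕ) : ℤ :=
  ∑ k ∈ Finset.range n, eulerianA (2 * n) k * (-1) ^ k * innerSum n k t

/-- The even polynomial Ξ_n, as a function on ℝ. -/
noncomputable def Xi (n : ℕ) (x : ℝ) : ℝ :=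
  ((-1 : ℝ) ^ (n + 1) / (2 ^ (4 * n - 2) * (Nat.factorial (2 * n - 1)))) *
    ∑ t ∈ Finset.range n, (CB n t : ℝ) * x ^ (2 * t)

/-- The even polynomial Λ_n, as a function on ℝ. -/
noncomputable def Lam (n : ℕ) (x : ℝ) : ℝ :=
  (2 * (-1 : ℝ) ^ (n + 1) / ((2 ^ (2 * n + 1) - 1) * (Nat.factorial (2 * n)))) *
    ∑ t ∈ Finset.range n, (CA n t : ℝ) * x ^ (2 * t)

/-- Ξ_n as a polynomial with real coefficients. -/
noncomputable def XiPoly (n : ℕ) : Polynomial ℝ :=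
  Polynomial.C ((-1 : ℝ) ^ (n + 1) / (2 ^ (4 * n - 2) * (Nat.factorial (2 * n - 1)))) *
    ∑ t ∈ Finset.range n, Polynomial.C (CB n t : ℝ) * Polynomial.X ^ (2 * t)

/-- Λ_n as a polynomial with real coefficients. -/
noncomputable def LamPoly (n : ℕ) : Polynomial ℝ :=
  Polynomial.C (2 * (-1 : ℝ) ^ (n + 1) / ((2 ^ (2 * n + 1) - 1) * (Nat.factorial (2 * n)))) *
    ∑ t ∈ Finset.range n, Polynomial.C (CA n t : ℝ) * Polynomial.X ^ (2 * t)




lemma alt_sum_choose (N r : ℕ) :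
    ∑ j ∈ range (r+1), (-1:ℤ)^j * (N+1).choose j = (-1)^r * N.choose r := by
  induction r with
  | zero => simp
  | succ r ih =>
    rw [sum_range_succ, ih, Nat.choose_succ_succ]
    push_cast
    ring

def Sfd (M m : ℕ) : ℤ := ∑ j ∈ range (M+1), (-1:ℤ)^j * M.choose j * (j:ℤ)^m

lemma Sfd_succ (M m : ℕ) (hm : 1 ≤ m) :
    Sfd (M+1) m = Sfd M m - ∑ r ∈ range (m+1), (m.choose r : ℤ) * Sfd M r := by
  have e1 : Sfd (M+1) m
      = (∑ i ∈ range (M+1), -((-1:ℤ)^i * (M.choose i) * ((i:ℤ)+1)^m))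
        + ∑ i ∈ range (M+1), (-1:ℤ)^(i+1) * (M.choose (i+1)) * ((i:ℤ)+1)^m := by
    rw [Sfd, Finset.sum_range_succ', ← Finset.sum_add_distrib]
    have h0 : (-1:ℤ)^0 * ((M+1).choose 0) * ((0:ℕ):ℤ)^m = 0 := by
      simp [zero_pow (by omega : m ≠ 0)]
    rw [h0, add_zero]
    refine Finset.sum_congr rfl (fun i _ => ?_)
    rw [Nat.choose_succ_succ]
    push_cast
    ring
  have e2 : (∑ i ∈ range (M+1), (-1:ℤ)^(i+1) * (M.choose (i+1)) * ((i:ℤ)+1)^m)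
      = Sfd M m := by
    have key := Finset.sum_range_succ'
      (fun j => (-1:ℤ)^j * (M.choose j) * (j:ℤ)^m) (M+1)
    have key2 := Finset.sum_range_succ
      (fun j => (-1:ℤ)^j * (M.choose j) * (j:ℤ)^m) (M+1)
    have hz1 : (-1:ℤ)^(M+1) * (M.choose (M+1)) * ((M+1:ℕ):ℤ)^m = 0 := by
      simp [Nat.choose_succ_self]
    have hz2 : (-1:ℤ)^0 * ((M.choose 0):ℤ) * ((0:ℕ):ℤ)^m = 0 := by
      simp [zero_pow (by omega : m ≠ 0)]
    have hcast : (∑ i ∈ range (M+1), (-1:ℤ)^(i+1) * (M.choose (i+1)) * ((i:ℤ)+1)^m)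
        = ∑ i ∈ range (M+1), (-1:ℤ)^(i+1) * (M.choose (i+1)) * ((i+1:ℕ):ℤ)^m := by
      refine Finset.sum_congr rfl (fun i _ => ?_)
      push_cast
      ring
    rw [hcast, Sfd]
    push_cast at key key2 hz1 hz2 ⊢
    omega
  have e3 : (∑ i ∈ range (M+1), -((-1:ℤ)^i * (M.choose i) * ((i:ℤ)+1)^m))
      = -∑ r ∈ range (m+1), (m.choose r : ℤ) * Sfd M r := by
    have hps : ∀ i : ℕ, ((i:ℤ)+1)^m = ∑ r ∈ range (m+1), (i:ℤ)^r * (m.choose r) := by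
      intro i
      rw [add_pow]
      exact Finset.sum_congr rfl (fun r _ => by rw [one_pow, mul_one])
    rw [Finset.sum_neg_distrib]
    refine neg_inj.mpr ?_
    calc ∑ i ∈ range (M+1), (-1:ℤ)^i * (M.choose i) * ((i:ℤ)+1)^m
        = ∑ i ∈ range (M+1), ∑ r ∈ range (m+1),
            (m.choose r : ℤ) * ((-1:ℤ)^i * (M.choose i) * (i:ℤ)^r) := by
          refine Finset.sum_congr rfl (fun i _ => ?_)
          rw [hps, Finset.mul_sum]
          exact Finset.sum_congr rfl (fun r _ => by ring)
      _ = ∑ r ∈ range (m+1), (m.choose r : ℤ) * Sfd M r := by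
          rw [Finset.sum_comm]
          refine Finset.sum_congr rfl (fun r _ => ?_)
          rw [Sfd, Finset.mul_sum]
  rw [e1, e2, e3]
  ring

lemma Sfd_spec (M : ℕ) :
    (∀ m, m < M → Sfd M m = 0) ∧ Sfd M M = (-1)^M * M.factorial := by
  induction M with
  | zero =>
    constructor
    · intro m hm; omega
    · simp [Sfd]
  | succ M ih =>
    have hz : ∀ m, m < M + 1 → Sfd (M+1) m = 0 := by
      intro m hm
      rcases Nat.eq_zero_or_pos m with h | h
      · subst h
        have h2 := Int.alternating_sum_range_choose (n := M+1)
        rw [if_neg (by omega : M + 1 ≠ 0)] at h2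
        simpa [Sfd] using h2
      · rw [Sfd_succ M m h, Finset.sum_range_succ]
        rw [Finset.sum_eq_zero (fun r hr => by
          rw [ih.1 r (by have := Finset.mem_range.mp hr; omega), mul_zero])]
        rw [Nat.choose_self]
        ring
    refine ⟨hz, ?_⟩
    rw [Sfd_succ M (M+1) (by omega), Finset.sum_range_succ, Finset.sum_range_succ]
    rw [Finset.sum_eq_zero (fun r hr => by
      rw [ih.1 r (Finset.mem_range.mp hr), mul_zero])]
    rw [ih.2, Nat.choose_self, Nat.choose_succ_self_right, Nat.factorial_succ]
    push_cast
    ring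

lemma fd_general (M m : ℕ) (a b : ℤ) :
    ∑ j ∈ range (M+1), (-1:ℤ)^j * M.choose j * (a + b*j)^m
    = ∑ r ∈ range (m+1), (m.choose r : ℤ) * b^r * a^(m-r) * Sfd M r := by
  have hps : ∀ j : ℕ, (a + b*(j:ℤ))^m
      = ∑ r ∈ range (m+1), (b^r * a^(m-r) * (m.choose r : ℤ)) * (j:ℤ)^r := by
    intro j
    rw [add_comm, add_pow]
    refine Finset.sum_congr rfl (fun r _ => ?_)
    rw [mul_pow]
    ring
  calc ∑ j ∈ range (M+1), (-1:ℤ)^j * M.choose j * (a + b*j)^m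
      = ∑ j ∈ range (M+1), ∑ r ∈ range (m+1),
          ((m.choose r : ℤ) * b^r * a^(m-r)) * ((-1:ℤ)^j * M.choose j * (j:ℤ)^r) := by
        refine Finset.sum_congr rfl (fun j _ => ?_)
        rw [hps, Finset.mul_sum]
        exact Finset.sum_congr rfl (fun r _ => by ring)
    _ = ∑ r ∈ range (m+1), (m.choose r : ℤ) * b^r * a^(m-r) * Sfd M r := by
        rw [Finset.sum_comm]
        refine Finset.sum_congr rfl (fun r _ => ?_)
        rw [Sfd, Finset.mul_sum]

lemma fd_zero (M m : ℕ) (a b : ℤ) (h : m < M) :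
    ∑ j ∈ range (M+1), (-1:ℤ)^j * M.choose j * (a + b*j)^m = 0 := by
  rw [fd_general]
  refine Finset.sum_eq_zero (fun r hr => ?_)
  rw [(Sfd_spec M).1 r (by have := Finset.mem_range.mp hr; omega), mul_zero]

lemma fd_top (M : ℕ) (a b : ℤ) :
    ∑ j ∈ range (M+1), (-1:ℤ)^j * M.choose j * (a + b*j)^M
    = (-1)^M * b^M * M.factorial := by
  rw [fd_general, Finset.sum_range_succ]
  rw [Finset.sum_eq_zero (fun r hr => by
    rw [(Sfd_spec M).1 r (Finset.mem_range.mp hr), mul_zero])]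
  rw [(Sfd_spec M).2, Nat.choose_self, Nat.sub_self]
  push_cast
  ring

def posPow (m : ℕ) (x : ℤ) : ℤ := if 0 < x then x^m else 0

lemma posPow_reflect (m : ℕ) (hm : 1 ≤ m) (x : ℤ) :
    posPow m x = x^m - (-1:ℤ)^m * posPow m (-x) := by
  rcases lt_trichotomy x 0 with h | h | h
  · rw [posPow, if_neg (by omega), posPow, if_pos (by omega)]
    rw [show ((-x)^m : ℤ) = (-1)^m * x^m from neg_pow x m]
    rw [← mul_assoc, ← mul_pow, neg_mul_neg, one_mul, one_pow, one_mul, sub_self]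
  · subst h
    simp [posPow, zero_pow (by omega : m ≠ 0)]
  · rw [posPow, if_pos h, posPow, if_neg (by omega)]
    ring

lemma neg_one_pow_sub (n j : ℕ) (h : j ≤ n) : (-1:ℤ)^(n-j) = (-1)^n * (-1)^j := by
  have : (-1:ℤ)^(n-j) * ((-1:ℤ)^j * (-1:ℤ)^j) = (-1)^n * (-1)^j := by
    rw [← mul_assoc, ← pow_add, Nat.sub_add_cancel h]
  simpa [← mul_pow] using this

lemma eulerianA_ext (m k : ℕ) (hk : k ≤ m) :
    eulerianA m k
      = ∑ j ∈ range (m+2), (-1:ℤ)^j * ((m+1).choose j) * posPow m ((k:ℤ)+1-j) := by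
  calc eulerianA m k
      = ∑ j ∈ range (k+1), (-1:ℤ)^j * ((m+1).choose j) * posPow m ((k:ℤ)+1-j) := by
        rw [eulerianA]
        refine Finset.sum_congr rfl (fun j hj => ?_)
        have hjk : j ≤ k := by have := Finset.mem_range.mp hj; omega
        have hjk' : (j:ℤ) ≤ k := by exact_mod_cast hjk
        rw [posPow, if_pos (by omega : (0:ℤ) < (k:ℤ)+1-j)]
        congr 1
        rw [show ((k+1-j:ℕ):ℤ) = (k:ℤ)+1-j by push_cast [show j ≤ k+1 by omega]; ring]
    _ = ∑ j ∈ range (m+2), (-1:ℤ)^j * ((m+1).choose j) * posPow m ((k:ℤ)+1-j) := by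
        refine Finset.sum_subset (Finset.range_subset_range.2 (by omega : k+1 ≤ m+2))
          (fun j _ hj' => ?_)
        have hjk : k+1 ≤ j := by simpa using hj'
        have hjk' : (k:ℤ)+1 ≤ j := by exact_mod_cast hjk
        rw [posPow, if_neg (by omega : ¬ (0:ℤ) < (k:ℤ)+1-j), mul_zero]

lemma eulerianB_ext (m k : ℕ) (hk : k ≤ m) :
    eulerianB m k
      = ∑ j ∈ range (m+2), (-1:ℤ)^j * ((m+1).choose j) * posPow m (2*k+1-2*j) := by
  calc eulerianB m k
      = ∑ j ∈ range (k+1), (-1:ℤ)^j * ((m+1).choose j) * posPow m (2*k+1-2*j) := by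
        rw [eulerianB]
        refine Finset.sum_congr rfl (fun j hj => ?_)
        have hjk : j ≤ k := by have := Finset.mem_range.mp hj; omega
        have hjk' : (j:ℤ) ≤ k := by exact_mod_cast hjk
        rw [posPow, if_pos (by omega : (0:ℤ) < 2*(k:ℤ)+1-2*j)]
        congr 1
        rw [show ((2*(k-j)+1:ℕ):ℤ) = 2*(k:ℤ)+1-2*j by push_cast [hjk]; ring]
    _ = ∑ j ∈ range (m+2), (-1:ℤ)^j * ((m+1).choose j) * posPow m (2*k+1-2*j) := by
        refine Finset.sum_subset (Finset.range_subset_range.2 (by omega : k+1 ≤ m+2))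
          (fun j _ hj' => ?_)
        have hjk : k+1 ≤ j := by simpa using hj'
        have hjk' : (k:ℤ)+1 ≤ j := by exact_mod_cast hjk
        rw [posPow, if_neg (by omega : ¬ (0:ℤ) < 2*(k:ℤ)+1-2*j), mul_zero]

lemma eulerianA_symm (m k : ℕ) (hm : 1 ≤ m) (hk : k ≤ m - 1) :
    eulerianA m k = eulerianA m (m - 1 - k) := by
  rw [eulerianA_ext m k (by omega), eulerianA_ext m (m-1-k) (by omega)]
  have hrhs : ∑ j ∈ range (m+2),
        (-1:ℤ)^j * ((m+1).choose j) * posPow m (((m-1-k:ℕ):ℤ)+1-j)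
      = ∑ j ∈ range (m+2),
        -((-1:ℤ)^m * ((-1:ℤ)^j * ((m+1).choose j) * posPow m (-((k:ℤ)+1-j)))) := by
    rw [← Finset.sum_range_reflect]
    refine Finset.sum_congr rfl (fun j hj => ?_)
    have hj' : j ≤ m+1 := by have := Finset.mem_range.mp hj; omega
    have he : m + 2 - 1 - j = m + 1 - j := by omega
    rw [he, Nat.choose_symm hj', neg_one_pow_sub (m+1) j hj']
    have harg : ((m-1-k:ℕ):ℤ)+1-((m+1-j:ℕ):ℤ) = -((k:ℤ)+1-j) := by omega
    rw [harg]
    ring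
  rw [hrhs]
  have hlhs : ∀ j : ℕ, (-1:ℤ)^j * ((m+1).choose j) * posPow m ((k:ℤ)+1-j)
      = (-1:ℤ)^j * (((m+1).choose j : ℤ)) * (((k:ℤ)+1)+(-1)*j)^m
        - (-1:ℤ)^m * ((-1:ℤ)^j * ((m+1).choose j) * posPow m (-((k:ℤ)+1-j))) := by
    intro j
    rw [posPow_reflect m hm ((k:ℤ)+1-j)]
    ring_nf
  rw [Finset.sum_congr rfl (fun j _ => hlhs j), Finset.sum_sub_distrib,
    fd_zero (m+1) m ((k:ℤ)+1) (-1) (by omega), Finset.sum_neg_distrib, zero_sub]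

lemma eulerianB_symm (m k : ℕ) (hm : 1 ≤ m) (hk : k ≤ m) :
    eulerianB m k = eulerianB m (m - k) := by
  rw [eulerianB_ext m k (by omega), eulerianB_ext m (m-k) (by omega)]
  have hrhs : ∑ j ∈ range (m+2),
        (-1:ℤ)^j * ((m+1).choose j) * posPow m (2*((m-k:ℕ):ℤ)+1-2*j)
      = ∑ j ∈ range (m+2),
        -((-1:ℤ)^m * ((-1:ℤ)^j * ((m+1).choose j) * posPow m (-(2*(k:ℤ)+1-2*j)))) := by
    rw [← Finset.sum_range_reflect]
    refine Finset.sum_congr rfl (fun j hj => ?_)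
    have hj' : j ≤ m+1 := by have := Finset.mem_range.mp hj; omega
    have he : m + 2 - 1 - j = m + 1 - j := by omega
    rw [he, Nat.choose_symm hj', neg_one_pow_sub (m+1) j hj']
    have harg : 2*((m-k:ℕ):ℤ)+1-2*((m+1-j:ℕ):ℤ) = -(2*(k:ℤ)+1-2*j) := by omega
    rw [harg]
    ring
  rw [hrhs]
  have hlhs : ∀ j : ℕ, (-1:ℤ)^j * ((m+1).choose j) * posPow m (2*(k:ℤ)+1-2*j)
      = (-1:ℤ)^j * (((m+1).choose j : ℤ)) * ((2*(k:ℤ)+1)+(-2)*j)^m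
        - (-1:ℤ)^m * ((-1:ℤ)^j * ((m+1).choose j) * posPow m (-(2*(k:ℤ)+1-2*j))) := by
    intro j
    rw [posPow_reflect m hm (2*(k:ℤ)+1-2*j)]
    ring_nf
  rw [Finset.sum_congr rfl (fun j _ => hlhs j), Finset.sum_sub_distrib,
    fd_zero (m+1) m (2*(k:ℤ)+1) (-2) (by omega), Finset.sum_neg_distrib, zero_sub]

lemma sum_triangle {β : Type*} [AddCommMonoid β] (N : ℕ) (g : ℕ → ℕ → β) :
    ∑ k ∈ range N, ∑ j ∈ range (k+1), g j k
    = ∑ j ∈ range N, ∑ i ∈ range (N - j), g j (j + i) := by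
  induction N with
  | zero => simp
  | succ N ih =>
    have hin : ∀ j ∈ range N, (∑ i ∈ range (N + 1 - j), g j (j + i))
        = (∑ i ∈ range (N - j), g j (j + i)) + g j N := by
      intro j hj
      have hjN : j ≤ N := by have := Finset.mem_range.mp hj; omega
      have h1 : N + 1 - j = (N - j) + 1 := by omega
      rw [h1, Finset.sum_range_succ]
      congr 2
      omega
    calc ∑ k ∈ range (N+1), ∑ j ∈ range (k+1), g j k
        = (∑ j ∈ range N, ∑ i ∈ range (N - j), g j (j + i))
            + ∑ j ∈ range (N+1), g j N := by
          rw [Finset.sum_range_succ, ih]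
      _ = (∑ j ∈ range N, ∑ i ∈ range (N - j), g j (j + i))
            + (∑ j ∈ range N, g j N + g N N) := by
          rw [Finset.sum_range_succ]
      _ = ∑ j ∈ range (N+1), ∑ i ∈ range (N + 1 - j), g j (j + i) := by
          rw [Finset.sum_range_succ, Finset.sum_congr rfl hin, Finset.sum_add_distrib]
          have h2 : N + 1 - N = 1 := by omega
          rw [h2, Finset.sum_range_one, Nat.add_zero, add_assoc]

lemma sum_triangle' {β : Type*} [AddCommMonoid β] (N : ℕ) (h : ℕ → ℕ → β) :
    ∑ j ∈ range N, ∑ i ∈ range (N - j), h j i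
    = ∑ i ∈ range N, ∑ j ∈ range (N - i), h j i := by
  have key : ∀ f : ℕ → ℕ → β, ∑ j ∈ range N, ∑ i ∈ range (N - j), f j i
      = ∑ k ∈ range N, ∑ j ∈ range (k+1), f j (k - j) := by
    intro f
    rw [sum_triangle N (fun j k => f j (k - j))]
    refine Finset.sum_congr rfl (fun j _ => Finset.sum_congr rfl (fun i _ => ?_))
    congr 1
    omega
  rw [key (fun j i => h j i), key (fun i j => h j i)]
  refine Finset.sum_congr rfl (fun k _ => ?_)
  rw [← Finset.sum_range_reflect]
  refine Finset.sum_congr rfl (fun j hj => ?_)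
  have hj' : j ≤ k := by have := Finset.mem_range.mp hj; omega
  congr 1 <;> omega

lemma FA (n : ℕ) (hn : 1 ≤ n) :
    ∑ k ∈ range (2*n), eulerianA (2*n) k = ((2*n).factorial : ℤ) := by
  have step1 : ∑ k ∈ range (2*n), eulerianA (2*n) k
      = ∑ j ∈ range (2*n), ∑ i ∈ range (2*n - j),
          (-1:ℤ)^j * ((2*n+1).choose j) * ((i+1:ℕ):ℤ)^(2*n) := by
    simp only [eulerianA, Nat.cast_pow]
    rw [sum_triangle (2*n)
      (fun j k => (-1:ℤ)^j * ((2*n+1).choose j) * ((k+1-j:ℕ):ℤ)^(2*n))]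
    refine Finset.sum_congr rfl (fun j _ => Finset.sum_congr rfl (fun i _ => ?_))
    rw [show j + i + 1 - j = i + 1 from by omega]
  rw [step1, sum_triangle' (2*n)
    (fun j i => (-1:ℤ)^j * ((2*n+1).choose j) * ((i+1:ℕ):ℤ)^(2*n))]
  have step3 : ∀ i ∈ range (2*n),
      (∑ j ∈ range (2*n - i), (-1:ℤ)^j * ((2*n+1).choose j) * ((i+1:ℕ):ℤ)^(2*n))
      = (-1:ℤ)^(2*n-1-i) * ((2*n).choose (2*n-1-i)) * ((i+1:ℕ):ℤ)^(2*n) := by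
    intro i hi
    have hi' : i < 2*n := Finset.mem_range.mp hi
    rw [← Finset.sum_mul, show 2*n - i = (2*n-1-i) + 1 from by omega,
      alt_sum_choose (2*n) (2*n-1-i)]
  rw [Finset.sum_congr rfl step3]
  have step4 : ∑ i ∈ range (2*n),
      (-1:ℤ)^(2*n-1-i) * ((2*n).choose (2*n-1-i)) * ((i+1:ℕ):ℤ)^(2*n)
      = ∑ l ∈ range (2*n),
          (-1:ℤ)^l * ((2*n).choose l) * (((2*n:ℕ):ℤ) + (-1)*l)^(2*n) := by
    rw [← Finset.sum_range_reflect
      (fun l => (-1:ℤ)^l * ((2*n).choose l) * (((2*n:ℕ):ℤ) + (-1)*l)^(2*n)) (2*n)]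
    refine Finset.sum_congr rfl (fun i hi => ?_)
    have hi' : i < 2*n := Finset.mem_range.mp hi
    congr 1
    have harg : ((2*n:ℕ):ℤ) + (-1)*((2*n-1-i:ℕ):ℤ) = ((i+1:ℕ):ℤ) := by omega
    rw [harg]
  rw [step4]
  have hful := fd_top (2*n) ((2*n:ℕ):ℤ) (-1)
  rw [Finset.sum_range_succ] at hful
  have hz : (-1:ℤ)^(2*n) * (((2*n).choose (2*n)):ℤ)
      * (((2*n:ℕ):ℤ) + (-1)*((2*n:ℕ):ℤ))^(2*n) = 0 := by
    rw [show ((2*n:ℕ):ℤ) + (-1)*((2*n:ℕ):ℤ) = 0 from by ring,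
      zero_pow (by omega : 2*n ≠ 0), mul_zero]
  rw [hz, add_zero] at hful
  rw [hful, (even_two_mul n).neg_one_pow]
  ring

lemma FB (n : ℕ) (hn : 1 ≤ n) :
    ∑ k ∈ range (2*n), eulerianB (2*n-1) k
      = 2^(2*n-1) * ((2*n-1).factorial : ℤ) := by
  have step1 : ∑ k ∈ range (2*n), eulerianB (2*n-1) k
      = ∑ j ∈ range (2*n), ∑ i ∈ range (2*n - j),
          (-1:ℤ)^j * ((2*n).choose j) * ((2*i+1:ℕ):ℤ)^(2*n-1) := by
    simp only [eulerianB, Nat.cast_pow, show 2*n-1+1 = 2*n from by omega]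
    rw [sum_triangle (2*n)
      (fun j k => (-1:ℤ)^j * ((2*n).choose j) * ((2*(k-j)+1:ℕ):ℤ)^(2*n-1))]
    refine Finset.sum_congr rfl (fun j _ => Finset.sum_congr rfl (fun i _ => ?_))
    rw [show 2*(j + i - j)+1 = 2*i + 1 from by omega]
  rw [step1, sum_triangle' (2*n)
    (fun j i => (-1:ℤ)^j * ((2*n).choose j) * ((2*i+1:ℕ):ℤ)^(2*n-1))]
  have step3 : ∀ i ∈ range (2*n),
      (∑ j ∈ range (2*n - i), (-1:ℤ)^j * ((2*n).choose j) * ((2*i+1:ℕ):ℤ)^(2*n-1))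
      = (-1:ℤ)^(2*n-1-i) * ((2*n-1).choose (2*n-1-i)) * ((2*i+1:ℕ):ℤ)^(2*n-1) := by
    intro i hi
    have hi' : i < 2*n := Finset.mem_range.mp hi
    have halt := alt_sum_choose (2*n-1) (2*n-1-i)
    rw [show 2*n-1+1 = 2*n from by omega] at halt
    rw [← Finset.sum_mul, show 2*n - i = (2*n-1-i) + 1 from by omega, halt]
  rw [Finset.sum_congr rfl step3]
  have step4 : ∑ i ∈ range (2*n),
      (-1:ℤ)^(2*n-1-i) * ((2*n-1).choose (2*n-1-i)) * ((2*i+1:ℕ):ℤ)^(2*n-1)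
      = ∑ l ∈ range (2*n),
          (-1:ℤ)^l * ((2*n-1).choose l) * (((4*n-1:ℕ):ℤ) + (-2)*l)^(2*n-1) := by
    rw [← Finset.sum_range_reflect
      (fun l => (-1:ℤ)^l * ((2*n-1).choose l) * (((4*n-1:ℕ):ℤ) + (-2)*l)^(2*n-1)) (2*n)]
    refine Finset.sum_congr rfl (fun i hi => ?_)
    have hi' : i < 2*n := Finset.mem_range.mp hi
    congr 1
    have harg : ((4*n-1:ℕ):ℤ) + (-2)*((2*n-1-i:ℕ):ℤ) = ((2*i+1:ℕ):ℤ) := by omega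
    rw [harg]
  rw [step4]
  have hful := fd_top (2*n-1) ((4*n-1:ℕ):ℤ) (-2)
  rw [show 2*n-1+1 = 2*n from by omega] at hful
  rw [hful]
  rw [show ((-1:ℤ))^(2*n-1) * (-2)^(2*n-1) = ((-1)*(-2))^(2*n-1) from (mul_pow _ _ _).symm]
  norm_num

lemma halfA (n : ℕ) (hn : 1 ≤ n) :
    2 * ∑ k ∈ range n, eulerianA (2*n) k = ((2*n).factorial : ℤ) := by
  have hsplit := Finset.sum_range_add (fun k => eulerianA (2*n) k) n n
  rw [show n+n = 2*n from by omega] at hsplit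
  have hrefl : ∑ i ∈ range n, eulerianA (2*n) (n+i)
      = ∑ k ∈ range n, eulerianA (2*n) k := by
    have hcong : ∀ i ∈ range n, eulerianA (2*n) (n+i) = eulerianA (2*n) (n-1-i) := by
      intro i hi
      have hi' : i < n := Finset.mem_range.mp hi
      have h := eulerianA_symm (2*n) (n+i) (by omega) (by omega)
      rw [h, show 2*n-1-(n+i) = n-1-i from by omega]
    rw [Finset.sum_congr rfl hcong,
      Finset.sum_range_reflect (fun k => eulerianA (2*n) k) n]
  have hfull : ∑ k ∈ range (2*n), eulerianA (2*n) k
      = (∑ k ∈ range n, eulerianA (2*n) k) + ∑ k ∈ range n, eulerianA (2*n) k := by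
    rw [hsplit, hrefl]
  rw [← FA n hn, hfull, two_mul]

lemma halfB (n : ℕ) (hn : 1 ≤ n) :
    2 * ∑ k ∈ range n, eulerianB (2*n-1) k
      = 2^(2*n-1) * ((2*n-1).factorial : ℤ) := by
  have hsplit := Finset.sum_range_add (fun k => eulerianB (2*n-1) k) n n
  rw [show n+n = 2*n from by omega] at hsplit
  have hrefl : ∑ i ∈ range n, eulerianB (2*n-1) (n+i)
      = ∑ k ∈ range n, eulerianB (2*n-1) k := by
    have hcong : ∀ i ∈ range n, eulerianB (2*n-1) (n+i) = eulerianB (2*n-1) (n-1-i) := by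
      intro i hi
      have hi' : i < n := Finset.mem_range.mp hi
      have h := eulerianB_symm (2*n-1) (n+i) (by omega) (by omega)
      rw [h, show 2*n-1-(n+i) = n-1-i from by omega]
    rw [Finset.sum_congr rfl hcong,
      Finset.sum_range_reflect (fun k => eulerianB (2*n-1) k) n]
  have hfull : ∑ k ∈ range (2*n), eulerianB (2*n-1) k
      = (∑ k ∈ range n, eulerianB (2*n-1) k) + ∑ k ∈ range n, eulerianB (2*n-1) k := by
    rw [hsplit, hrefl]
  rw [← FB n hn, hfull, two_mul]




lemma innerSum_top (n k : ℕ) (hk : k < n) : innerSum n k (n-1) = (-1:ℤ)^k := by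
  rw [innerSum, Finset.sum_eq_single k]
  · rw [if_pos (by omega : k ≤ n-1), Nat.choose_self,
      show 2*(n-1-k)+1 = 2*n-2*k-1 from by omega, Nat.choose_self]
    norm_num
  · intro i hi hne
    have hik : i < k := by have := Finset.mem_range.mp hi; omega
    rw [if_pos (by omega : i ≤ n-1),
      Nat.choose_eq_zero_of_lt (by omega : 2*n-2*k-1 < 2*(n-1-i)+1)]
    norm_num
  · intro h
    exact absurd (Finset.self_mem_range_succ k) h

lemma CB_val (n : ℕ) (hn : 1 ≤ n) :
    CB n (n-1) = 2^(2*n-2) * ((2*n-1).factorial : ℤ) := by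
  have hc : ∀ k ∈ range n, eulerianB (2*n-1) k * (-1:ℤ)^k * innerSum n k (n-1)
      = eulerianB (2*n-1) k := by
    intro k hk
    rw [innerSum_top n k (Finset.mem_range.mp hk), mul_assoc, ← mul_pow]
    norm_num
  have h2 : 2 * CB n (n-1) = 2 * (2^(2*n-2) * ((2*n-1).factorial : ℤ)) := by
    rw [CB, Finset.sum_congr rfl hc, halfB n hn,
      show 2*n-1 = (2*n-2)+1 from by omega, pow_succ]
    ring
  omega

lemma CA_val (n : ℕ) (hn : 1 ≤ n) :
    2 * CA n (n-1) = ((2*n).factorial : ℤ) := by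
  have hc : ∀ k ∈ range n, eulerianA (2*n) k * (-1:ℤ)^k * innerSum n k (n-1)
      = eulerianA (2*n) k := by
    intro k hk
    rw [innerSum_top n k (Finset.mem_range.mp hk), mul_assoc, ← mul_pow]
    norm_num
  rw [CA, Finset.sum_congr rfl hc, halfA n hn]

lemma coeff_aux (n : ℕ) (hn : 1 ≤ n) (c : ℕ → ℝ) :
    (∑ t ∈ range n, Polynomial.C (c t) * Polynomial.X^(2*t)).coeff (2*n-2)
      = c (n-1) := by
  rw [Polynomial.finset_sum_coeff]
  rw [Finset.sum_eq_single (n-1)]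
  · rw [Polynomial.coeff_C_mul, Polynomial.coeff_X_pow,
      if_pos (by omega : 2*n-2 = 2*(n-1)), mul_one]
  · intro t ht hne
    have ht' : t < n := Finset.mem_range.mp ht
    rw [Polynomial.coeff_C_mul, Polynomial.coeff_X_pow,
      if_neg (by omega : ¬ 2*n-2 = 2*t), mul_zero]
  · intro h
    exact absurd (Finset.mem_range.mpr (by omega)) h

lemma deg_aux (n : ℕ) (hn : 1 ≤ n) (c : ℕ → ℝ) :
    (∑ t ∈ range n, Polynomial.C (c t) * Polynomial.X^(2*t)).natDegree ≤ 2*n-2 := by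
  refine Polynomial.natDegree_sum_le_of_forall_le _ _ (fun t ht => ?_)
  have ht' : t < n := Finset.mem_range.mp ht
  calc (Polynomial.C (c t) * Polynomial.X^(2*t)).natDegree
      ≤ (Polynomial.X^(2*t) : Polynomial ℝ).natDegree :=
        Polynomial.natDegree_C_mul_le _ _
    _ = 2*t := Polynomial.natDegree_X_pow _
    _ ≤ 2*n-2 := by omega

theorem leading_coefficients (n : ℕ) (hn : 1 ≤ n) :
    (XiPoly n).coeff (2 * n - 2) = (-1 : ℝ) ^ (n + 1) / 2 ^ (2 * n) ∧
    (LamPoly n).coeff (2 * n - 2) = (-1 : ℝ) ^ (n + 1) / (2 ^ (2 * n + 1) - 1) ∧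
    CB n (n - 1) = 2 ^ (2 * n - 2) * (Nat.factorial (2 * n - 1)) ∧
    2 * CA n (n - 1) = (Nat.factorial (2 * n) : ℤ) ∧
    (XiPoly n).natDegree = 2 * n - 2 ∧
    (LamPoly n).natDegree = 2 * n - 2 := by
  have hfB : (((2*n-1).factorial : ℕ) : ℝ) ≠ 0 := by
    exact_mod_cast (Nat.factorial_pos (2*n-1)).ne'
  have hfA : (((2*n).factorial : ℕ) : ℝ) ≠ 0 := by
    exact_mod_cast (Nat.factorial_pos (2*n)).ne'
  have hq : (2:ℝ)^(2*n+1) - 1 ≠ 0 := by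
    have h1 : (1:ℝ) < 2^(2*n+1) := by
      apply one_lt_pow₀ (by norm_num : (1:ℝ) < 2) (by omega)
    have := sub_pos.mpr h1
    exact this.ne'
  have hCBr : ((CB n (n-1) : ℤ) : ℝ) = 2^(2*n-2) * ((2*n-1).factorial : ℝ) := by
    rw [CB_val n hn]
    push_cast
    ring
  have hCAr : ((CA n (n-1) : ℤ) : ℝ) = ((2*n).factorial : ℝ) / 2 := by
    have h := congrArg (fun z : ℤ => (z : ℝ)) (CA_val n hn)
    push_cast at h
    linarith
  have hXc : (XiPoly n).coeff (2 * n - 2) = (-1 : ℝ) ^ (n + 1) / 2 ^ (2 * n) := by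
    rw [XiPoly, Polynomial.coeff_C_mul, coeff_aux n hn (fun t => ((CB n t : ℤ):ℝ)),
      hCBr, show (2:ℝ)^(4*n-2) = 2^(2*n-2) * 2^(2*n) from by rw [← pow_add]; congr 1; omega]
    field_simp
  have hLc : (LamPoly n).coeff (2 * n - 2) = (-1 : ℝ) ^ (n + 1) / (2 ^ (2 * n + 1) - 1) := by
    rw [LamPoly, Polynomial.coeff_C_mul, coeff_aux n hn (fun t => ((CA n t : ℤ):ℝ)), hCAr]
    field_simp
  refine ⟨hXc, hLc, CB_val n hn, CA_val n hn, ?_, ?_⟩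
  · refine le_antisymm ?_ ?_
    · exact le_trans (Polynomial.natDegree_C_mul_le _ _)
        (deg_aux n hn (fun t => ((CB n t : ℤ):ℝ)))
    · apply Polynomial.le_natDegree_of_ne_zero
      rw [hXc]
      exact div_ne_zero (pow_ne_zero _ (by norm_num)) (pow_ne_zero _ (by norm_num))
  · refine le_antisymm ?_ ?_
    · exact le_trans (Polynomial.natDegree_C_mul_le _ _)
        (deg_aux n hn (fun t => ((CA n t : ℤ):ℝ)))
    · apply Polynomial.le_natDegree_of_ne_zero
      rw [hLc]
      exact div_ne_zero (pow_ne_zero _ (by norm_num)) hq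
end

section
/- For every integer n ≥ 1, Ξ_n(0) = (−1)^n E_{2n}/(2^{2n}(2n−1)!) and Λ_n(0) = (−1)^n · 2^{2n+2}(2^{2n+2}−1) · B_{2n+2}/((2^{2n+1}−1)(2n+2)(2n)!), where E_{2n} is the 2n-th Euler (secant) number and B_{2n+2} is the (2n+2)-nd Bernoulli number. -/
open Finset

/-- Euler (secant) numbers: E 0 = 1, E n = 0 for odd n, and for even n ≥ 2,
E n = −Σ_{j<n} C(n,j) E j (the odd-index terms vanish); this is equivalent to the
exponential generating function 2/(e^x+e^{−x}) = Σ_{n≥0} E_n x^n/n!. -/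
def secantE : ℕ → ℚ
  | 0 => 1
  | (n + 1) =>
    if (n + 1) % 2 = 1 then 0
    else -∑ j ∈ (Finset.range (n + 1)).attach,
      (Nat.choose (n + 1) j.1 : ℚ) * secantE j.1
  decreasing_by exact Nat.lt_succ_iff.mpr (Nat.lt_succ_iff.mp (Finset.mem_range.mp j.2))


namespace VAZ



lemma triangle (K : ℕ) (F : ℕ → ℕ → ℚ) :
    ∑ k ∈ range K, ∑ j ∈ range (k+1), F j (k - j)
      = ∑ j ∈ range K, ∑ l ∈ range (K - j), F j l := by
  induction K with
  | zero => simp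
  | succ K ih =>
    rw [Finset.sum_range_succ, ih]
    have h1 : ∀ j ∈ range (K+1), ∑ l ∈ range (K+1-j), F j l
        = ∑ l ∈ range (K-j), F j l + F j (K-j) := by
      intro j hj
      have hj' : j ≤ K := Nat.lt_succ_iff.mp (mem_range.mp hj)
      have : K + 1 - j = (K - j) + 1 := by omega
      rw [this, Finset.sum_range_succ]
    rw [Finset.sum_congr rfl h1, Finset.sum_add_distrib, Finset.sum_range_succ (fun j => ∑ l ∈ range (K-j), F j l)]
    simp [add_assoc, add_comm, add_left_comm]

lemma triangle' (K : ℕ) (F : ℕ → ℕ → ℚ) :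
    ∑ j ∈ range K, ∑ l ∈ range (K - j), F j l
      = ∑ k ∈ range K, ∑ j ∈ range (k+1), F j (k - j) :=
  (triangle K F).symm

lemma triangle_swap (K : ℕ) (F : ℕ → ℕ → ℚ) :
    ∑ j ∈ range K, ∑ i ∈ range (K - j), F j i
      = ∑ i ∈ range K, ∑ j ∈ range (K - i), F j i := by
  rw [triangle' K F, triangle' K (fun i j => F j i)]
  apply Finset.sum_congr rfl
  intro k _
  rw [← Finset.sum_range_reflect (fun j => F j (k - j)) (k+1)]
  apply Finset.sum_congr rfl
  intro i hi
  have hik : i ≤ k := Nat.lt_succ_iff.mp (mem_range.mp hi)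
  have : k + 1 - 1 - i = k - i := by omega
  rw [this]
  congr 1
  omega

lemma alt_pow : ∀ (p N : ℕ), p < N →
    ∑ i ∈ range (N+1), (-1:ℚ)^i * (N.choose i) * (i:ℚ)^p = 0 := by
  intro p
  induction p using Nat.strong_induction_on with
  | _ p IH =>
    intro N hp
    match p, N with
    | p, 0 => omega
    | 0, (N'+1) =>
      have h := add_pow (-1 : ℚ) 1 (N'+1)
      simp only [one_pow, mul_one, neg_add_cancel] at h
      have h0 : (0:ℚ)^(N'+1) = 0 := by simp
      rw [h0] at h
      rw [← h.symm]
      · apply Finset.sum_congr rfl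
        intro i _
        simp
    | (q+1), (N'+1) =>
      rw [Finset.sum_range_succ' (fun i => (-1:ℚ)^i * ((N'+1).choose i) * (i:ℚ)^(q+1))]
      have key : ∀ i : ℕ, (-1:ℚ)^(i+1) * (((N'+1).choose (i+1) : ℕ):ℚ) * (((i+1 : ℕ)):ℚ)^(q+1)
          = -((N':ℚ)+1) * ((-1:ℚ)^i * (N'.choose i) * ((i:ℚ)+1)^q) := by
        intro i
        have hc : ((N'+1 : ℕ):ℚ) * (N'.choose i : ℚ) = ((N'+1).choose (i+1) : ℚ) * ((i+1:ℕ):ℚ) := by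
          rw [← Nat.cast_mul, ← Nat.cast_mul, Nat.add_one_mul_choose_eq]
        push_cast at hc ⊢
        linear_combination ((-1:ℚ)^i * ((i:ℚ)+1)^q) * hc
      push_cast
      push_cast at key
      rw [Finset.sum_congr rfl (fun i _ => key i)]
      rw [← Finset.mul_sum]
      have expand : ∀ i : ℕ, ((i:ℚ)+1)^q = ∑ r ∈ range (q+1), (i:ℚ)^r * (q.choose r) := by
        intro i
        have := add_pow (i:ℚ) 1 q
        simpa using this
      have : ∑ i ∈ range (N'+1), (-1:ℚ)^i * (N'.choose i) * ((i:ℚ)+1)^q = 0 := by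
        calc ∑ i ∈ range (N'+1), (-1:ℚ)^i * (N'.choose i) * ((i:ℚ)+1)^q
            = ∑ i ∈ range (N'+1), ∑ r ∈ range (q+1), (q.choose r) * ((-1:ℚ)^i * (N'.choose i) * (i:ℚ)^r) := by
              apply Finset.sum_congr rfl; intro i _
              rw [expand i, Finset.mul_sum]
              apply Finset.sum_congr rfl; intro r _; ring
          _ = ∑ r ∈ range (q+1), (q.choose r : ℚ) * ∑ i ∈ range (N'+1), (-1:ℚ)^i * (N'.choose i) * (i:ℚ)^r := by
              rw [Finset.sum_comm]
              apply Finset.sum_congr rfl; intro r _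
              rw [Finset.mul_sum]
          _ = 0 := by
              apply Finset.sum_eq_zero; intro r hr
              have hr' : r < q + 1 := mem_range.mp hr
              rw [IH r hr' N' (by omega), mul_zero]
      rw [this, mul_zero]
      norm_num



lemma alt_shift (p N : ℕ) (h : p < N) (a b : ℚ) :
    ∑ j ∈ range (N+1), (-1:ℚ)^j * (N.choose j) * (a + b*(j:ℚ))^p = 0 := by
  have expand : ∀ j : ℕ, (a + b*(j:ℚ))^p
      = ∑ r ∈ range (p+1), (b^r * a^(p-r) * (p.choose r)) * (j:ℚ)^r := by
    intro j
    rw [add_comm, add_pow]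
    apply Finset.sum_congr rfl; intro r _; ring
  calc ∑ j ∈ range (N+1), (-1:ℚ)^j * (N.choose j) * (a + b*(j:ℚ))^p
      = ∑ j ∈ range (N+1), ∑ r ∈ range (p+1),
          (b^r * a^(p-r) * (p.choose r)) * ((-1:ℚ)^j * (N.choose j) * (j:ℚ)^r) := by
        apply Finset.sum_congr rfl; intro j _
        rw [expand j, Finset.mul_sum]
        apply Finset.sum_congr rfl; intro r _; ring
    _ = ∑ r ∈ range (p+1), (b^r * a^(p-r) * (p.choose r)) *
          ∑ j ∈ range (N+1), (-1:ℚ)^j * (N.choose j) * (j:ℚ)^r := by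
        rw [Finset.sum_comm]
        apply Finset.sum_congr rfl; intro r _
        rw [Finset.mul_sum]
    _ = 0 := by
        apply Finset.sum_eq_zero; intro r hr
        rw [alt_pow r N (lt_of_lt_of_le (mem_range.mp hr) h), mul_zero]

lemma choose3q {n k j : ℕ} (hj : j ≤ k) (hk : k ≤ n) :
    (n.choose k : ℚ) * (k.choose j) = (n.choose j : ℚ) * ((n-j).choose (k-j)) := by
  rw [Nat.cast_choose ℚ hk, Nat.cast_choose ℚ hj, Nat.cast_choose ℚ (hj.trans hk),
    Nat.cast_choose ℚ (show k - j ≤ n - j by omega)]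
  have h0 : n - j - (k - j) = n - k := by omega
  rw [h0]
  have f1 : (Nat.factorial k : ℚ) ≠ 0 := by positivity
  have f2 : (Nat.factorial j : ℚ) ≠ 0 := by positivity
  have f3 : (Nat.factorial (n-k) : ℚ) ≠ 0 := by positivity
  have f4 : (Nat.factorial (k-j) : ℚ) ≠ 0 := by positivity
  have f5 : (Nat.factorial (n-j) : ℚ) ≠ 0 := by positivity
  field_simp

lemma choose3q' {m i j : ℕ} (h : i + j ≤ m) :
    (m.choose j : ℚ) * ((m-j).choose i) = (m.choose i : ℚ) * ((m-i).choose j) := by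
  have h1 : (m.choose (i+j) : ℚ) * ((i+j).choose j) = (m.choose j : ℚ) * ((m-j).choose i) := by
    have := choose3q (show j ≤ i + j by omega) h
    simpa [Nat.add_sub_cancel] using this
  have h2 : (m.choose (i+j) : ℚ) * ((i+j).choose i) = (m.choose i : ℚ) * ((m-i).choose j) := by
    have := choose3q (show i ≤ i + j by omega) h
    have h3 : i + j - i = j := by omega
    rw [h3] at this
    exact this
  have h4 : ((i+j).choose j : ℚ) = ((i+j).choose i : ℚ) := by
    norm_cast
    exact Nat.choose_symm_add.symm
  rw [← h1, h4, h2]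

lemma partial_alt (f Q : ℕ → ℚ) (hQ : ∀ M, Q (M+1) + Q M = 2 * f M) :
    ∀ M, 2 * ∑ l ∈ range M, (-1:ℚ)^l * f l = Q 0 - (-1:ℚ)^M * Q M := by
  intro M; induction M with
  | zero => simp
  | succ M ih =>
    rw [Finset.sum_range_succ, mul_add, ih]
    linear_combination (-(-1:ℚ)^M) * (hQ M)

lemma full_alt (m : ℕ) (f Q : ℕ → ℚ) (c : ℕ → ℚ)
    (hQ : ∀ M, Q (M+1) + Q M = 2 * f M)
    (hc : ∀ i : ℕ, Q i = ∑ j ∈ range (m+1), c j * (i:ℚ)^j) :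
    ∑ k ∈ range (m+1), (-1:ℚ)^k *
        (∑ j ∈ range (k+1), (-1:ℚ)^j * (((m+1).choose j : ℕ):ℚ) * f (k-j))
      = 2^m * Q 0 := by
  have step1 : ∑ k ∈ range (m+1), (-1:ℚ)^k *
        (∑ j ∈ range (k+1), (-1:ℚ)^j * (((m+1).choose j : ℕ):ℚ) * f (k-j))
      = ∑ j ∈ range (m+1), (((m+1).choose j : ℕ):ℚ) *
          ∑ l ∈ range (m+1-j), (-1:ℚ)^l * f l := by
    have e1 : ∀ k ∈ range (m+1), (-1:ℚ)^k *
        (∑ j ∈ range (k+1), (-1:ℚ)^j * (((m+1).choose j : ℕ):ℚ) * f (k-j))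
        = ∑ j ∈ range (k+1), (-1:ℚ)^(k-j) * (((m+1).choose j : ℕ):ℚ) * f (k-j) := by
      intro k _
      rw [Finset.mul_sum]
      apply Finset.sum_congr rfl; intro j hj
      have hjk : j ≤ k := Nat.lt_succ_iff.mp (mem_range.mp hj)
      have hsplit : (-1:ℚ)^k = (-1:ℚ)^j * (-1:ℚ)^(k-j) := by
        rw [← pow_add]; congr 1; omega
      have hjj : (-1:ℚ)^j * (-1:ℚ)^j = 1 := by
        rw [← pow_add]; exact Even.neg_one_pow ⟨j, rfl⟩
      rw [hsplit]
      linear_combination ((-1:ℚ)^(k-j) * (((m+1).choose j : ℕ):ℚ) * f (k-j)) * hjj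
    calc ∑ k ∈ range (m+1), (-1:ℚ)^k *
        (∑ j ∈ range (k+1), (-1:ℚ)^j * (((m+1).choose j : ℕ):ℚ) * f (k-j))
        = ∑ k ∈ range (m+1), ∑ j ∈ range (k+1),
            (-1:ℚ)^(k-j) * (((m+1).choose j : ℕ):ℚ) * f (k-j) := Finset.sum_congr rfl e1
      _ = ∑ j ∈ range (m+1), ∑ l ∈ range (m+1-j),
            (-1:ℚ)^l * (((m+1).choose j : ℕ):ℚ) * f l :=
          triangle (m+1) (fun j l => (-1:ℚ)^l * (((m+1).choose j : ℕ):ℚ) * f l)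
      _ = ∑ j ∈ range (m+1), (((m+1).choose j : ℕ):ℚ) *
            ∑ l ∈ range (m+1-j), (-1:ℚ)^l * f l := by
          apply Finset.sum_congr rfl; intro j _
          rw [Finset.mul_sum]
          apply Finset.sum_congr rfl; intro l _; ring
  have hA : ∑ i ∈ range (m+2), (-1:ℚ)^i * (((m+1).choose i : ℕ):ℚ) * Q i = 0 := by
    calc ∑ i ∈ range (m+2), (-1:ℚ)^i * (((m+1).choose i : ℕ):ℚ) * Q i
        = ∑ i ∈ range (m+2), ∑ j ∈ range (m+1),
            c j * ((-1:ℚ)^i * (((m+1).choose i : ℕ):ℚ) * (i:ℚ)^j) := by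
          apply Finset.sum_congr rfl; intro i _
          rw [hc i, Finset.mul_sum]
          apply Finset.sum_congr rfl; intro j _; ring
      _ = ∑ j ∈ range (m+1), c j *
            ∑ i ∈ range (m+2), (-1:ℚ)^i * (((m+1).choose i : ℕ):ℚ) * (i:ℚ)^j := by
          rw [Finset.sum_comm]
          apply Finset.sum_congr rfl; intro j _
          rw [Finset.mul_sum]
      _ = 0 := by
          apply Finset.sum_eq_zero; intro j hj
          rw [alt_pow j (m+1) (mem_range.mp hj), mul_zero]
  have hS2 : ∑ j ∈ range (m+1), (-1:ℚ)^(m+1-j) * (((m+1).choose j : ℕ):ℚ) * Q (m+1-j)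
      = -(Q 0) := by
    have refl1 := Finset.sum_range_reflect
      (fun j => (-1:ℚ)^(m+1-j) * (((m+1).choose j : ℕ):ℚ) * Q (m+1-j)) (m+1)
    rw [← refl1]
    have e2 : ∀ j ∈ range (m+1),
        (-1:ℚ)^(m+1-(m+1-1-j)) * (((m+1).choose (m+1-1-j) : ℕ):ℚ) * Q (m+1-(m+1-1-j))
        = (-1:ℚ)^(j+1) * (((m+1).choose (j+1) : ℕ):ℚ) * Q (j+1) := by
      intro j hj
      have hjm : j ≤ m := Nat.lt_succ_iff.mp (mem_range.mp hj)
      have h1 : m + 1 - 1 - j = m - j := by omega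
      have h2 : m + 1 - (m - j) = j + 1 := by omega
      rw [h1, h2]
      congr 2
      norm_cast
      rw [show m - j = (m+1) - (j+1) by omega]
      exact Nat.choose_symm (by omega)
    rw [Finset.sum_congr rfl e2]
    have := Finset.sum_range_succ' (fun i => (-1:ℚ)^i * (((m+1).choose i : ℕ):ℚ) * Q i) (m+1)
    rw [hA] at this
    have h0 : (-1:ℚ)^0 * (((m+1).choose 0 : ℕ):ℚ) * Q 0 = Q 0 := by simp
    rw [h0] at this
    linarith [this]
  have hS1 : ∑ j ∈ range (m+1), (((m+1).choose j : ℕ):ℚ) = 2^(m+1) - 1 := by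
    have := Nat.sum_range_choose (m+1)
    have h2 : ∑ j ∈ range (m+2), (((m+1).choose j : ℕ):ℚ) = 2^(m+1) := by
      rw [← Nat.cast_sum]
      rw [this]
      push_cast; ring
    rw [Finset.sum_range_succ] at h2
    simp only [Nat.choose_self, Nat.cast_one] at h2
    linarith
  have key : 2 * (∑ k ∈ range (m+1), (-1:ℚ)^k *
        (∑ j ∈ range (k+1), (-1:ℚ)^j * (((m+1).choose j : ℕ):ℚ) * f (k-j))) = 2^(m+1) * Q 0 := by
    rw [step1, Finset.mul_sum]
    calc ∑ j ∈ range (m+1), 2 * ((((m+1).choose j : ℕ):ℚ) * ∑ l ∈ range (m+1-j), (-1:ℚ)^l * f l)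
        = ∑ j ∈ range (m+1), (((m+1).choose j : ℕ):ℚ) *
            (Q 0 - (-1:ℚ)^(m+1-j) * Q (m+1-j)) := by
          apply Finset.sum_congr rfl; intro j _
          rw [← partial_alt f Q hQ (m+1-j)]
          ring
      _ = (∑ j ∈ range (m+1), (((m+1).choose j : ℕ):ℚ)) * Q 0
          - ∑ j ∈ range (m+1), (-1:ℚ)^(m+1-j) * (((m+1).choose j : ℕ):ℚ) * Q (m+1-j) := by
          rw [Finset.sum_mul, ← Finset.sum_sub_distrib]
          apply Finset.sum_congr rfl; intro j _; ring
      _ = 2^(m+1) * Q 0 := by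
          rw [hS1, hS2]; ring
  have h2 : (2:ℚ) ^ (m+1) = 2 * 2^m := by ring
  rw [h2] at key
  linarith [key]




lemma secantE_zero : secantE 0 = 1 := by rw [secantE]

lemma secantE_succ (n : ℕ) : secantE (n+1) =
    if (n + 1) % 2 = 1 then 0
    else -∑ j ∈ (Finset.range (n + 1)).attach,
      (Nat.choose (n + 1) j.1 : ℚ) * secantE j.1 := by
  rw [secantE]

lemma secantE_odd {k : ℕ} (h : k % 2 = 1) : secantE k = 0 := by
  cases k with
  | zero => simp at h
  | succ n => rw [secantE_succ, if_pos h]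

lemma secantE_even_rec {s : ℕ} (h1 : s % 2 = 0) (h2 : 1 ≤ s) :
    ∑ j ∈ range (s+1), (s.choose j : ℚ) * secantE j = 0 := by
  obtain ⟨n, rfl⟩ : ∃ n, s = n + 1 := ⟨s - 1, by omega⟩
  rw [Finset.sum_range_succ]
  have hE : secantE (n+1) = -∑ j ∈ range (n+1), ((n+1).choose j : ℚ) * secantE j := by
    rw [secantE_succ, if_neg (by omega)]
    rw [Finset.sum_attach (range (n+1)) (fun j => ((n+1).choose j : ℚ) * secantE j)]
  rw [hE, Nat.choose_self]
  ring

lemma relR (s : ℕ) : ∑ j ∈ range (s+1),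
    (s.choose j : ℚ) * secantE j * (if (s-j) % 2 = 0 then (1:ℚ) else 0)
    = if s = 0 then 1 else 0 := by
  rcases Nat.eq_zero_or_pos s with rfl | hs
  · simp [secantE_zero]
  rw [if_neg (by omega)]
  by_cases hpar : s % 2 = 0
  · have he : ∀ j ∈ range (s+1), (s.choose j:ℚ) * secantE j *
        (if (s-j) % 2 = 0 then (1:ℚ) else 0) = (s.choose j:ℚ) * secantE j := by
      intro j hj
      have hj' : j ≤ s := Nat.lt_succ_iff.mp (mem_range.mp hj)
      by_cases hjp : j % 2 = 0
      · rw [if_pos (by omega)]; ring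
      · rw [secantE_odd (by omega : j % 2 = 1)]; simp
    rw [Finset.sum_congr rfl he, secantE_even_rec hpar hs]
  · apply Finset.sum_eq_zero; intro j hj
    have hj' : j ≤ s := Nat.lt_succ_iff.mp (mem_range.mp hj)
    by_cases hjp : j % 2 = 0
    · rw [if_neg (by omega)]; ring
    · rw [secantE_odd (by omega : j % 2 = 1)]; ring

lemma binom_alt (t : ℕ) : ∑ i ∈ range (t+1), ((t.choose i : ℕ):ℚ) * (1 + (-1:ℚ)^i)
    = 2^t + (if t = 0 then 1 else 0) := by
  have h1 : ∑ i ∈ range (t+1), ((t.choose i : ℕ):ℚ) = 2^t := by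
    have := Nat.sum_range_choose t
    have h2 : (((∑ i ∈ range (t+1), t.choose i : ℕ)):ℚ) = ((2^t : ℕ) : ℚ) := by rw [this]
    push_cast at h2
    exact h2
  have h2 : ∑ i ∈ range (t+1), ((t.choose i : ℕ):ℚ) * (-1:ℚ)^i
      = if t = 0 then 1 else 0 := by
    rcases Nat.eq_zero_or_pos t with rfl | ht
    · simp
    · rw [if_neg (by omega)]
      have := alt_pow 0 t ht
      calc ∑ i ∈ range (t+1), ((t.choose i : ℕ):ℚ) * (-1:ℚ)^i
          = ∑ i ∈ range (t+1), (-1:ℚ)^i * (t.choose i) * (i:ℚ)^0 := by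
            apply Finset.sum_congr rfl; intro i _; ring
        _ = 0 := this
  calc ∑ i ∈ range (t+1), ((t.choose i : ℕ):ℚ) * (1 + (-1:ℚ)^i)
      = ∑ i ∈ range (t+1), (((t.choose i : ℕ):ℚ) + ((t.choose i : ℕ):ℚ) * (-1:ℚ)^i) := by
        apply Finset.sum_congr rfl; intro i _; ring
    _ = 2^t + (if t = 0 then 1 else 0) := by
        rw [Finset.sum_add_distrib, h1, h2]

lemma one_add_neg_one_pow (i : ℕ) : 1 + (-1:ℚ)^i = 2 * (if i % 2 = 0 then 1 else 0) := by
  rcases Nat.even_or_odd i with h | h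
  · rw [h.neg_one_pow, if_pos (Nat.even_iff.mp h)]; ring
  · have hi := Nat.odd_iff.mp h
    rw [h.neg_one_pow, if_neg (by omega)]; ring

lemma starB (r : ℕ) :
    ∑ j ∈ range (r+1), (r.choose j : ℚ) * secantE j * 2^(r-j) + secantE r = 2 := by
  have hEr : ∑ j ∈ range (r+1), (if j = r then (r.choose j:ℚ) * secantE j else 0)
      = secantE r := by
    rw [Finset.sum_ite_eq' (range (r+1)) r (fun j => (r.choose j:ℚ) * secantE j)]
    rw [if_pos (mem_range.mpr (by omega))]
    simp [Nat.choose_self]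
  have step0 : ∑ j ∈ range (r+1), (r.choose j : ℚ) * secantE j * 2^(r-j) + secantE r
      = ∑ j ∈ range (r+1), ∑ i ∈ range ((r+1)-j),
          (r.choose j:ℚ) * secantE j * ((r-j).choose i) * (1 + (-1:ℚ)^i) := by
    rw [← hEr, ← Finset.sum_add_distrib]
    apply Finset.sum_congr rfl; intro j hj
    have hj' : j ≤ r := Nat.lt_succ_iff.mp (mem_range.mp hj)
    have hr : (r+1) - j = (r-j) + 1 := by omega
    rw [hr]
    have expand : ∑ i ∈ range ((r-j)+1),
        (r.choose j:ℚ) * secantE j * ((r-j).choose i) * (1 + (-1:ℚ)^i)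
        = (r.choose j:ℚ) * secantE j * (2^(r-j) + (if r - j = 0 then 1 else 0)) := by
      rw [← binom_alt (r-j), Finset.mul_sum]
      apply Finset.sum_congr rfl; intro i _; ring
    rw [expand]
    have : (if r - j = 0 then (1:ℚ) else 0) = (if j = r then (1:ℚ) else 0) := by
      by_cases h : j = r
      · rw [if_pos h, if_pos (by omega)]
      · rw [if_neg h, if_neg (by omega)]
    rw [this]
    by_cases h : j = r
    · rw [if_pos h, if_pos h]; ring
    · rw [if_neg h, if_neg h]; ring
  rw [step0]
  rw [triangle' (r+1) (fun j i => (r.choose j:ℚ) * secantE j * ((r-j).choose i) * (1 + (-1:ℚ)^i))]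
  have step2 : ∀ k ∈ range (r+1), ∑ j ∈ range (k+1),
      (r.choose j:ℚ) * secantE j * ((r-j).choose (k-j)) * (1 + (-1:ℚ)^(k-j))
      = 2 * (r.choose k : ℚ) * ∑ j ∈ range (k+1),
          (k.choose j : ℚ) * secantE j * (if (k-j) % 2 = 0 then (1:ℚ) else 0) := by
    intro k hk
    have hk' : k ≤ r := Nat.lt_succ_iff.mp (mem_range.mp hk)
    rw [Finset.mul_sum]
    apply Finset.sum_congr rfl; intro j hj
    have hj' : j ≤ k := Nat.lt_succ_iff.mp (mem_range.mp hj)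
    have h3 := choose3q hj' hk'
    rw [one_add_neg_one_pow (k-j)]
    -- goal: C(r,j) E_j C(r-j,k-j) * (2 * ite) = 2 C(r,k) * (C(k,j) E_j ite)
    linear_combination (2 * secantE j * (if (k-j) % 2 = 0 then (1:ℚ) else 0)) * h3.symm
  rw [Finset.sum_congr rfl step2]
  have step3 : ∀ k ∈ range (r+1), 2 * (r.choose k : ℚ) * ∑ j ∈ range (k+1),
      (k.choose j : ℚ) * secantE j * (if (k-j) % 2 = 0 then (1:ℚ) else 0)
      = if k = 0 then 2 * (r.choose k : ℚ) else 0 := by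
    intro k _
    rw [relR k]
    by_cases h : k = 0
    · rw [if_pos h, if_pos h]; ring
    · rw [if_neg h, if_neg h]; ring
  rw [Finset.sum_congr rfl step3]
  rw [Finset.sum_ite_eq' (range (r+1)) 0 (fun k => 2 * (r.choose k : ℚ))]
  rw [if_pos (mem_range.mpr (by omega))]
  simp



noncomputable def uB (p : ℕ) : ℚ := ∑ i ∈ range (p+1), (p.choose i : ℚ) * 2^i * bernoulli i

lemma bern_full (p : ℕ) : ∑ i ∈ range (p+1), (p.choose i : ℚ) * bernoulli i
    = bernoulli p + (if p = 1 then 1 else 0) := by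
  rw [Finset.sum_range_succ, sum_bernoulli]
  simp [Nat.choose_self]
  ring

lemma DC (p : ℕ) : ∑ k ∈ range (p+1), (p.choose k : ℚ) * uB k
    = 2^p * (bernoulli p + (if p = 1 then 1 else 0)) := by
  have e1 : ∀ k ∈ range (p+1), (p.choose k : ℚ) * uB k
      = ∑ i ∈ range (k+1), ((p.choose (i+(k-i)):ℚ) * ((i+(k-i)).choose i) * 2^i * bernoulli i) := by
    intro k hk
    unfold uB
    rw [Finset.mul_sum]
    apply Finset.sum_congr rfl; intro i hi
    have hik : i ≤ k := Nat.lt_succ_iff.mp (mem_range.mp hi)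
    have h : i + (k - i) = k := by omega
    rw [h]; ring
  rw [Finset.sum_congr rfl e1]
  rw [triangle (p+1) (fun i l => (p.choose (i+l):ℚ) * ((i+l).choose i) * 2^i * bernoulli i)]
  have e2 : ∀ i ∈ range (p+1), ∑ l ∈ range ((p+1)-i),
      ((p.choose (i+l):ℚ) * ((i+l).choose i) * 2^i * bernoulli i)
      = (p.choose i : ℚ) * 2^p * bernoulli i := by
    intro i hi
    have hip : i ≤ p := Nat.lt_succ_iff.mp (mem_range.mp hi)
    have e3 : ∀ l ∈ range ((p+1)-i), (p.choose (i+l):ℚ) * ((i+l).choose i) * 2^i * bernoulli i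
        = (p.choose i : ℚ) * (((p-i).choose l : ℕ):ℚ) * 2^i * bernoulli i := by
      intro l hl
      have hl' : l ≤ p - i := by have := mem_range.mp hl; omega
      have h4 := choose3q (show i ≤ i + l by omega) (show i + l ≤ p by omega)
      have h5 : i + l - i = l := by omega
      rw [h5] at h4
      rw [h4]
    rw [Finset.sum_congr rfl e3]
    have hsum : ∑ l ∈ range ((p+1)-i), (((p-i).choose l : ℕ):ℚ) = 2^(p-i) := by
      have h6 : (p+1) - i = (p-i) + 1 := by omega
      rw [h6]
      have := Nat.sum_range_choose (p-i)
      have h7 : ((∑ l ∈ range ((p-i)+1), (p-i).choose l : ℕ) : ℚ) = ((2^(p-i) : ℕ):ℚ) := by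
        rw [this]
      push_cast at h7
      exact h7
    calc ∑ l ∈ range ((p+1)-i), (p.choose i : ℚ) * (((p-i).choose l : ℕ):ℚ) * 2^i * bernoulli i
        = ((p.choose i : ℚ) * 2^i * bernoulli i) * ∑ l ∈ range ((p+1)-i), (((p-i).choose l : ℕ):ℚ) := by
          rw [Finset.mul_sum]
          apply Finset.sum_congr rfl; intro l _; ring
      _ = (p.choose i : ℚ) * 2^p * bernoulli i := by
          rw [hsum]
          have : (2:ℚ)^i * 2^(p-i) = 2^p := by
            rw [← pow_add]
            congr 1
            omega
          linear_combination ((p.choose i:ℚ) * bernoulli i) * this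
  rw [Finset.sum_congr rfl e2]
  rw [← bern_full p, Finset.mul_sum]
  apply Finset.sum_congr rfl; intro i _; ring

noncomputable def wB (p : ℕ) : ℚ := uB p - (2 - 2^p) * bernoulli p

lemma wrel (p : ℕ) : ∑ k ∈ range (p+1), (p.choose k : ℚ) * wB k = wB p := by
  have hsplit : ∑ k ∈ range (p+1), (p.choose k : ℚ) * wB k
      = (∑ k ∈ range (p+1), (p.choose k : ℚ) * uB k)
        - 2 * (∑ k ∈ range (p+1), (p.choose k : ℚ) * bernoulli k)
        + ∑ k ∈ range (p+1), (p.choose k : ℚ) * 2^k * bernoulli k := by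
    rw [two_mul, ← Finset.sum_add_distrib, ← Finset.sum_sub_distrib, ← Finset.sum_add_distrib]
    apply Finset.sum_congr rfl; intro k _
    unfold wB; ring
  rw [hsplit, DC p, bern_full p]
  have huB : ∑ k ∈ range (p+1), (p.choose k : ℚ) * 2^k * bernoulli k = uB p := rfl
  rw [huB]
  unfold wB
  by_cases h : p = 1
  · subst h; rw [if_pos rfl]; norm_num
  · rw [if_neg h]; ring

lemma wB_zero : ∀ p, wB p = 0 := by
  intro p
  induction p using Nat.strong_induction_on with
  | _ p IH =>
    have h := wrel (p+1)
    rw [Finset.sum_range_succ, Finset.sum_range_succ] at h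
    have hz : ∑ k ∈ range p, ((p+1).choose k : ℚ) * wB k = 0 := by
      apply Finset.sum_eq_zero; intro k hk
      rw [IH k (mem_range.mp hk), mul_zero]
    rw [hz, Nat.choose_self, Nat.choose_succ_self_right] at h
    push_cast at h
    have hp : ((p:ℚ)+1) ≠ 0 := by positivity
    have : ((p:ℚ)+1) * wB p = 0 := by linarith
    exact (mul_eq_zero.mp this).resolve_left hp

lemma IdB (p : ℕ) : uB p = (2 - 2^p) * bernoulli p := by
  have := wB_zero p
  unfold wB at this
  linarith

noncomputable def eQ : ℕ → ℚ :=
  fun j => if j = 0 then 1 else 2*(2^(j+1)-1)*bernoulli (j+1)/((j:ℚ)+1)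

lemma starA (r : ℕ) : ∑ j ∈ range (r+1), (r.choose j : ℚ) * eQ j + eQ r = 2 := by
  rcases Nat.eq_zero_or_pos r with rfl | hr
  · norm_num [eQ]
  obtain ⟨r', rfl⟩ : ∃ r', r = r' + 1 := ⟨r - 1, by omega⟩
  set r := r' + 1 with hrdef
  have hA : ∑ j ∈ range (r+1), (r.choose j : ℚ) * eQ j
      = (∑ j ∈ range r, (r.choose (j+1) : ℚ) * eQ (j+1)) + 1 := by
    rw [Finset.sum_range_succ' (fun j => (r.choose j : ℚ) * eQ j) r]
    simp [eQ]
  have key : ∀ j : ℕ, (r.choose (j+1) : ℚ) * eQ (j+1)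
      = (2/((r:ℚ)+1)) * (((r+1).choose (j+2) : ℚ) * (2^(j+2)-1) * bernoulli (j+2)) := by
    intro j
    have hc : ((r+1 : ℕ):ℚ) * (r.choose (j+1) : ℚ) = ((r+1).choose (j+2) : ℚ) * ((j+2:ℕ):ℚ) := by
      rw [← Nat.cast_mul, ← Nat.cast_mul, Nat.add_one_mul_choose_eq]
    push_cast at hc
    unfold eQ
    rw [if_neg (by omega)]
    have h2 : ((j:ℚ)+1)+1 ≠ 0 := by positivity
    have h3 : ((r:ℚ)+1) ≠ 0 := by positivity
    field_simp
    push_cast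
    linear_combination ((2^(j+2)-1) * bernoulli (j+2)) * hc
  rw [Finset.sum_congr rfl (fun j _ => key j), ← Finset.mul_sum] at hA
  -- T := ∑ j ∈ range r, C(r+1,j+2)(2^{j+2}-1)B_{j+2}
  have hT : ∑ j ∈ range r, (((r+1).choose (j+2) : ℚ) * (2^(j+2)-1) * bernoulli (j+2))
      = uB (r+1) - bernoulli (r+1) + ((r:ℚ)+1)/2 := by
    have hfull : ∑ i ∈ range (r+2), (((r+1).choose i : ℚ) * (2^i-1) * bernoulli i)
        = uB (r+1) - (bernoulli (r+1) + (if r+1 = 1 then (1:ℚ) else 0)) := by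
      rw [← bern_full (r+1)]
      unfold uB
      rw [← Finset.sum_sub_distrib]
      apply Finset.sum_congr rfl; intro i _; ring
    rw [if_neg (by omega)] at hfull
    rw [Finset.sum_range_succ' (fun i => ((r+1).choose i : ℚ) * (2^i-1) * bernoulli i) (r+1)] at hfull
    rw [Finset.sum_range_succ' (fun i => ((r+1).choose (i+1) : ℚ) * (2^(i+1)-1) * bernoulli (i+1)) r] at hfull
    have g0 : ((r+1).choose 0 : ℚ) * (2^0-1) * bernoulli 0 = 0 := by norm_num
    have g1 : ((r+1).choose 1 : ℚ) * (2^1-1) * bernoulli 1 = -((r:ℚ)+1)/2 := by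
      rw [Nat.choose_one_right, bernoulli_one]
      push_cast; ring
    rw [g0, g1] at hfull
    have : ∑ j ∈ range r, (((r+1).choose (j+2) : ℚ) * (2^(j+2)-1) * bernoulli (j+2))
        = ∑ i ∈ range r, ((r+1).choose (i+1+1) : ℚ) * (2^(i+1+1)-1) * bernoulli (i+1+1) := rfl
    rw [this]
    linarith [hfull]
  rw [hT, IdB (r+1)] at hA
  have h3 : ((r:ℚ)+1) ≠ 0 := by positivity
  have heQr : eQ r = 2*(2^(r+1)-1)*bernoulli (r+1)/((r:ℚ)+1) := by
    unfold eQ; rw [if_neg (by omega)]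
  rw [hA, heQr]
  field_simp
  ring





noncomputable def QBf (m M : ℕ) : ℚ :=
  ∑ j ∈ range (m+1), (m.choose j : ℚ) * secantE j * 2^(m-j) * (M:ℚ)^(m-j)

noncomputable def QAf (m M : ℕ) : ℚ :=
  ∑ j ∈ range (m+1), (m.choose j : ℚ) * eQ j * (M:ℚ)^(m-j)

lemma QBf_poly (m : ℕ) : ∀ i : ℕ, QBf m i
    = ∑ j ∈ range (m+1), ((m.choose (m-j) : ℚ) * secantE (m-j) * 2^j) * (i:ℚ)^j := by
  intro i
  rw [← Finset.sum_range_reflect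
    (fun j => ((m.choose (m-j) : ℚ) * secantE (m-j) * 2^j) * (i:ℚ)^j) (m+1)]
  unfold QBf
  apply Finset.sum_congr rfl; intro j hj
  have hjm : j ≤ m := Nat.lt_succ_iff.mp (mem_range.mp hj)
  have h1 : m + 1 - 1 - j = m - j := by omega
  have h2 : m - (m - j) = j := by omega
  rw [h1, h2]

lemma QAf_poly (m : ℕ) : ∀ i : ℕ, QAf m i
    = ∑ j ∈ range (m+1), ((m.choose (m-j) : ℚ) * eQ (m-j)) * (i:ℚ)^j := by
  intro i
  rw [← Finset.sum_range_reflect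
    (fun j => ((m.choose (m-j) : ℚ) * eQ (m-j)) * (i:ℚ)^j) (m+1)]
  unfold QAf
  apply Finset.sum_congr rfl; intro j hj
  have hjm : j ≤ m := Nat.lt_succ_iff.mp (mem_range.mp hj)
  have h1 : m + 1 - 1 - j = m - j := by omega
  have h2 : m - (m - j) = j := by omega
  rw [h1, h2]

lemma QBf_zero (m : ℕ) : QBf m 0 = secantE m := by
  unfold QBf
  rw [Finset.sum_range_succ]
  have h1 : ∑ j ∈ range m, (m.choose j : ℚ) * secantE j * 2^(m-j) * ((0:ℕ):ℚ)^(m-j) = 0 := by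
    apply Finset.sum_eq_zero; intro j hj
    have : (((0:ℕ)):ℚ)^(m-j) = 0 := by
      have : m - j ≠ 0 := by have := mem_range.mp hj; omega
      simp [this]
    rw [this, mul_zero]
  rw [h1]
  simp

lemma QAf_zero (m : ℕ) : QAf m 0 = eQ m := by
  unfold QAf
  rw [Finset.sum_range_succ]
  have h1 : ∑ j ∈ range m, (m.choose j : ℚ) * eQ j * ((0:ℕ):ℚ)^(m-j) = 0 := by
    apply Finset.sum_eq_zero; intro j hj
    have : (((0:ℕ)):ℚ)^(m-j) = 0 := by
      have : m - j ≠ 0 := by have := mem_range.mp hj; omega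
      simp [this]
    rw [this, mul_zero]
  rw [h1]
  simp

lemma hQB (m : ℕ) : ∀ M : ℕ, QBf m (M+1) + QBf m M = 2 * (2*(M:ℚ)+1)^m := by
  intro M
  have expand : ∀ t : ℕ, ((M:ℚ)+1)^t = ∑ i ∈ range (t+1), (M:ℚ)^i * (t.choose i) := by
    intro t
    have := add_pow (M:ℚ) 1 t
    simpa using this
  have step1 : QBf m (M+1) = ∑ j ∈ range (m+1), ∑ i ∈ range ((m+1)-j),
      (m.choose j : ℚ) * secantE j * 2^(m-j) * ((m-j).choose i) * (M:ℚ)^i := by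
    unfold QBf
    apply Finset.sum_congr rfl; intro j hj
    have hjm : j ≤ m := Nat.lt_succ_iff.mp (mem_range.mp hj)
    have hcast : (((M+1:ℕ)):ℚ) = (M:ℚ)+1 := by push_cast; ring
    rw [hcast, expand (m-j), Finset.mul_sum]
    have hr : (m+1) - j = (m-j) + 1 := by omega
    rw [hr]
    apply Finset.sum_congr rfl; intro i _; ring
  rw [step1]
  rw [triangle_swap (m+1) (fun j i => (m.choose j : ℚ) * secantE j * 2^(m-j) * ((m-j).choose i) * (M:ℚ)^i)]
  have step2 : ∀ i ∈ range (m+1), ∑ j ∈ range ((m+1)-i),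
      (m.choose j : ℚ) * secantE j * 2^(m-j) * ((m-j).choose i) * (M:ℚ)^i
      = (m.choose i : ℚ) * 2^i * (M:ℚ)^i *
          ∑ j ∈ range ((m-i)+1), ((m-i).choose j : ℚ) * secantE j * 2^((m-i)-j) := by
    intro i hi
    have him : i ≤ m := Nat.lt_succ_iff.mp (mem_range.mp hi)
    have hr : (m+1) - i = (m-i) + 1 := by omega
    rw [hr, Finset.mul_sum]
    apply Finset.sum_congr rfl; intro j hj
    have hjm : j ≤ m - i := Nat.lt_succ_iff.mp (mem_range.mp hj)
    have hcc := choose3q' (show i + j ≤ m by omega)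
    have hpow : (2:ℚ)^(m-j) = 2^i * 2^((m-i)-j) := by
      rw [← pow_add]; congr 1; omega
    rw [hpow]
    linear_combination (secantE j * 2^i * 2^((m-i)-j) * (M:ℚ)^i) * hcc
  rw [Finset.sum_congr rfl step2]
  have step3 : QBf m M = ∑ i ∈ range (m+1),
      (m.choose i : ℚ) * 2^i * (M:ℚ)^i * secantE (m-i) := by
    unfold QBf
    rw [← Finset.sum_range_reflect
      (fun i => (m.choose i : ℚ) * 2^i * (M:ℚ)^i * secantE (m-i)) (m+1)]
    apply Finset.sum_congr rfl; intro j hj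
    have hjm : j ≤ m := Nat.lt_succ_iff.mp (mem_range.mp hj)
    have h1 : m + 1 - 1 - j = m - j := by omega
    have h2 : m - (m - j) = j := by omega
    rw [h1, h2]
    have h3 : (m.choose (m-j) : ℚ) = (m.choose j : ℚ) := by
      norm_cast
      exact Nat.choose_symm hjm
    rw [h3]
    ring
  rw [step3, ← Finset.sum_add_distrib]
  have step4 : ∀ i ∈ range (m+1),
      (m.choose i : ℚ) * 2^i * (M:ℚ)^i *
          (∑ j ∈ range ((m-i)+1), ((m-i).choose j : ℚ) * secantE j * 2^((m-i)-j))
        + (m.choose i : ℚ) * 2^i * (M:ℚ)^i * secantE (m-i)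
      = 2 * ((2*(M:ℚ))^i * 1^(m-i) * (m.choose i : ℚ)) := by
    intro i _
    have := starB (m-i)
    have h4 : (∑ j ∈ range ((m-i)+1), ((m-i).choose j : ℚ) * secantE j * 2^((m-i)-j))
        = 2 - secantE (m-i) := by linarith
    rw [h4, mul_pow]
    ring
  rw [Finset.sum_congr rfl step4, ← Finset.mul_sum, ← add_pow (2*(M:ℚ)) 1 m]

lemma hQA (m : ℕ) : ∀ M : ℕ, QAf m (M+1) + QAf m M = 2 * ((M:ℚ)+1)^m := by
  intro M
  have expand : ∀ t : ℕ, ((M:ℚ)+1)^t = ∑ i ∈ range (t+1), (M:ℚ)^i * (t.choose i) := by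
    intro t
    have := add_pow (M:ℚ) 1 t
    simpa using this
  have step1 : QAf m (M+1) = ∑ j ∈ range (m+1), ∑ i ∈ range ((m+1)-j),
      (m.choose j : ℚ) * eQ j * ((m-j).choose i) * (M:ℚ)^i := by
    unfold QAf
    apply Finset.sum_congr rfl; intro j hj
    have hjm : j ≤ m := Nat.lt_succ_iff.mp (mem_range.mp hj)
    have hcast : (((M+1:ℕ)):ℚ) = (M:ℚ)+1 := by push_cast; ring
    rw [hcast, expand (m-j), Finset.mul_sum]
    have hr : (m+1) - j = (m-j) + 1 := by omega
    rw [hr]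
    apply Finset.sum_congr rfl; intro i _; ring
  rw [step1]
  rw [triangle_swap (m+1) (fun j i => (m.choose j : ℚ) * eQ j * ((m-j).choose i) * (M:ℚ)^i)]
  have step2 : ∀ i ∈ range (m+1), ∑ j ∈ range ((m+1)-i),
      (m.choose j : ℚ) * eQ j * ((m-j).choose i) * (M:ℚ)^i
      = (m.choose i : ℚ) * (M:ℚ)^i *
          ∑ j ∈ range ((m-i)+1), ((m-i).choose j : ℚ) * eQ j := by
    intro i hi
    have him : i ≤ m := Nat.lt_succ_iff.mp (mem_range.mp hi)
    have hr : (m+1) - i = (m-i) + 1 := by omega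
    rw [hr, Finset.mul_sum]
    apply Finset.sum_congr rfl; intro j hj
    have hjm : j ≤ m - i := Nat.lt_succ_iff.mp (mem_range.mp hj)
    have hcc := choose3q' (show i + j ≤ m by omega)
    linear_combination (eQ j * (M:ℚ)^i) * hcc
  rw [Finset.sum_congr rfl step2]
  have step3 : QAf m M = ∑ i ∈ range (m+1),
      (m.choose i : ℚ) * (M:ℚ)^i * eQ (m-i) := by
    unfold QAf
    rw [← Finset.sum_range_reflect
      (fun i => (m.choose i : ℚ) * (M:ℚ)^i * eQ (m-i)) (m+1)]
    apply Finset.sum_congr rfl; intro j hj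
    have hjm : j ≤ m := Nat.lt_succ_iff.mp (mem_range.mp hj)
    have h1 : m + 1 - 1 - j = m - j := by omega
    have h2 : m - (m - j) = j := by omega
    rw [h1, h2]
    have h3 : (m.choose (m-j) : ℚ) = (m.choose j : ℚ) := by
      norm_cast
      exact Nat.choose_symm hjm
    rw [h3]
    ring
  rw [step3, ← Finset.sum_add_distrib]
  have step4 : ∀ i ∈ range (m+1),
      (m.choose i : ℚ) * (M:ℚ)^i *
          (∑ j ∈ range ((m-i)+1), ((m-i).choose j : ℚ) * eQ j)
        + (m.choose i : ℚ) * (M:ℚ)^i * eQ (m-i)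
      = 2 * ((M:ℚ)^i * 1^(m-i) * (m.choose i : ℚ)) := by
    intro i _
    have := starA (m-i)
    have h4 : (∑ j ∈ range ((m-i)+1), ((m-i).choose j : ℚ) * eQ j)
        = 2 - eQ (m-i) := by linarith
    rw [h4]
    ring
  rw [Finset.sum_congr rfl step4, ← Finset.mul_sum, ← add_pow (M:ℚ) 1 m]

lemma SB_eval (m : ℕ) :
    ∑ k ∈ range (m+1), (-1:ℚ)^k *
        (∑ j ∈ range (k+1), (-1:ℚ)^j * (((m+1).choose j : ℕ):ℚ) * (2*(((k-j:ℕ)):ℚ)+1)^m)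
      = 2^m * secantE m := by
  have := full_alt m (fun l => (2*((l:ℕ):ℚ)+1)^m) (QBf m)
    (fun j => (m.choose (m-j) : ℚ) * secantE (m-j) * 2^j) (hQB m) (QBf_poly m)
  rw [QBf_zero m] at this
  exact this

lemma SA_eval (m : ℕ) :
    ∑ k ∈ range (m+1), (-1:ℚ)^k *
        (∑ j ∈ range (k+1), (-1:ℚ)^j * (((m+1).choose j : ℕ):ℚ) * ((((k-j:ℕ)):ℚ)+1)^m)
      = 2^m * eQ m := by
  have := full_alt m (fun l => (((l:ℕ):ℚ)+1)^m) (QAf m)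
    (fun j => (m.choose (m-j) : ℚ) * eQ (m-j)) (hQA m) (QAf_poly m)
  rw [QAf_zero m] at this
  exact this






noncomputable def eBq (m k : ℕ) : ℚ := ((eulerianB m k : ℤ) : ℚ)
noncomputable def eAq (m k : ℕ) : ℚ := ((eulerianA m k : ℤ) : ℚ)

lemma eBq_eq (m k : ℕ) : eBq m k
    = ∑ j ∈ range (k+1), (-1:ℚ)^j * (((m+1).choose j : ℕ):ℚ) * (2*(((k-j:ℕ)):ℚ)+1)^m := by
  unfold eBq eulerianB
  push_cast
  ring

lemma eAq_eq (m k : ℕ) : eAq m k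
    = ∑ j ∈ range (k+1), (-1:ℚ)^j * (((m+1).choose j : ℕ):ℚ) * ((((k-j:ℕ)):ℚ)+1)^m := by
  unfold eAq eulerianA
  push_cast
  apply Finset.sum_congr rfl; intro j hj
  have hjk : j ≤ k := Nat.lt_succ_iff.mp (mem_range.mp hj)
  have h1 : (((k+1-j:ℕ)):ℚ) = (((k-j:ℕ)):ℚ)+1 := by
    have h2 : k + 1 - j = (k - j) + 1 := by omega
    rw [h2]; push_cast; ring
  rw [h1]

lemma eBq_eqQ (m k : ℕ) : eBq m k
    = ∑ j ∈ range (k+1), (-1:ℚ)^j * (((m+1).choose j : ℕ):ℚ) * (2*((k:ℚ)-j)+1)^m := by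
  rw [eBq_eq]
  apply Finset.sum_congr rfl; intro j hj
  have hjk : j ≤ k := Nat.lt_succ_iff.mp (mem_range.mp hj)
  rw [Nat.cast_sub hjk]

lemma eAq_eqQ (m k : ℕ) : eAq m k
    = ∑ j ∈ range (k+1), (-1:ℚ)^j * (((m+1).choose j : ℕ):ℚ) * ((k:ℚ)+1-j)^m := by
  rw [eAq_eq]
  apply Finset.sum_congr rfl; intro j hj
  have hjk : j ≤ k := Nat.lt_succ_iff.mp (mem_range.mp hj)
  rw [Nat.cast_sub hjk]
  ring_nf

lemma eBq_zero (m : ℕ) : eBq m 0 = 1 := by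
  rw [eBq_eq]; simp

lemma eAq_zero (m : ℕ) : eAq m 0 = 1 := by
  rw [eAq_eq]; simp

lemma eBq_top (m : ℕ) : eBq m (m+1) = 0 := by
  rw [eBq_eqQ]
  have h := alt_shift m (m+1) (by omega) (2*((m+1:ℕ):ℚ)+1) (-2)
  rw [← h]
  apply Finset.sum_congr rfl; intro j _
  ring_nf

lemma eAq_top (m : ℕ) : eAq m (m+1) = 0 := by
  rw [eAq_eqQ]
  have h := alt_shift m (m+1) (by omega) (((m+1:ℕ):ℚ)+1) (-1)
  rw [← h]
  apply Finset.sum_congr rfl; intro j _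
  ring_nf

lemma tail_eq (m k : ℕ) (hk : k ≤ m) (g : ℕ → ℚ)
    (hfull : ∑ j ∈ range (m+2), g j = 0) :
    ∑ j ∈ range (k+1), g j = -∑ x ∈ range ((m+1)-k), g (m+1-x) := by
  have hsplit : ∑ j ∈ range ((k+1) + ((m+1)-k)), g j
      = ∑ j ∈ range (k+1), g j + ∑ x ∈ range ((m+1)-k), g ((k+1) + x) :=
    Finset.sum_range_add g (k+1) ((m+1)-k)
  have h2 : (k+1) + ((m+1)-k) = m + 2 := by omega
  rw [h2, hfull] at hsplit
  have h3 : ∑ x ∈ range ((m+1)-k), g ((k+1) + x)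
      = ∑ x ∈ range ((m+1)-k), g (m+1-x) := by
    rw [← Finset.sum_range_reflect (fun x => g ((k+1) + x)) ((m+1)-k)]
    apply Finset.sum_congr rfl; intro x hx
    have hx' : x < (m+1) - k := mem_range.mp hx
    congr 1
    omega
  rw [h3] at hsplit
  linarith

lemma neg_one_pow_sub (m x : ℕ) (hx : x ≤ m+1) (hm : (m+1) % 2 = 0) :
    (-1:ℚ)^(m+1-x) = (-1:ℚ)^x := by
  have hb : (-1:ℚ)^x * (-1:ℚ)^x = 1 := by
    rw [← pow_add]; exact Even.neg_one_pow ⟨x, rfl⟩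
  have hab : (-1:ℚ)^(m+1-x) * (-1:ℚ)^x = 1 := by
    rw [← pow_add]
    have h1 : m+1-x+x = m+1 := by omega
    rw [h1]
    exact Even.neg_one_pow (Nat.even_iff.mpr hm)
  calc (-1:ℚ)^(m+1-x) = ((-1:ℚ)^(m+1-x) * (-1:ℚ)^x) * (-1:ℚ)^x := by
        rw [mul_assoc, hb, mul_one]
    _ = (-1:ℚ)^x := by rw [hab, one_mul]

lemma neg_one_pow_sub' (m x : ℕ) (hx : x ≤ m+1) (hm : (m+1) % 2 = 1) :
    (-1:ℚ)^(m+1-x) = -(-1:ℚ)^x := by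
  have hb : (-1:ℚ)^x * (-1:ℚ)^x = 1 := by
    rw [← pow_add]; exact Even.neg_one_pow ⟨x, rfl⟩
  have hab : (-1:ℚ)^(m+1-x) * (-1:ℚ)^x = -1 := by
    rw [← pow_add]
    have h1 : m+1-x+x = m+1 := by omega
    rw [h1]
    exact Odd.neg_one_pow (Nat.odd_iff.mpr hm)
  calc (-1:ℚ)^(m+1-x) = ((-1:ℚ)^(m+1-x) * (-1:ℚ)^x) * (-1:ℚ)^x := by
        rw [mul_assoc, hb, mul_one]
    _ = -(-1:ℚ)^x := by rw [hab]; ring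

lemma symB (m k : ℕ) (hm : m % 2 = 1) (hk : k ≤ m) : eBq m k = eBq m (m-k) := by
  have hfull : ∑ j ∈ range (m+2),
      (-1:ℚ)^j * (((m+1).choose j : ℕ):ℚ) * (2*((k:ℚ)-j)+1)^m = 0 := by
    have h := alt_shift m (m+1) (by omega) (2*(k:ℚ)+1) (-2)
    rw [← h]
    apply Finset.sum_congr rfl; intro j _
    ring_nf
  rw [eBq_eqQ, tail_eq m k hk _ hfull, eBq_eqQ]
  have hrange : (m+1) - k = (m-k) + 1 := by omega
  rw [hrange, ← Finset.sum_neg_distrib]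
  apply Finset.sum_congr rfl
  intro x hx
  have hx' : x ≤ m - k := Nat.lt_succ_iff.mp (mem_range.mp hx)
  have hx2 : x ≤ m + 1 := by omega
  have hsign := neg_one_pow_sub m x hx2 (by omega)
  have hchoose : (((m+1).choose (m+1-x) : ℕ):ℚ) = (((m+1).choose x : ℕ):ℚ) := by
    norm_cast
    exact Nat.choose_symm hx2
  have hcast : (((m+1-x:ℕ)):ℚ) = (m:ℚ)+1-x := by
    rw [Nat.cast_sub hx2]; push_cast; ring
  have hcast2 : (((m-k:ℕ)):ℚ) = (m:ℚ)-k := by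
    rw [Nat.cast_sub hk]
  rw [hsign, hchoose, hcast, hcast2]
  have hbase : 2*((k:ℚ) - ((m:ℚ)+1-x))+1 = -(2*(((m:ℚ)-k)-x)+1) := by ring
  rw [hbase]
  have hodd : Odd m := Nat.odd_iff.mpr hm
  rw [hodd.neg_pow]
  ring

lemma symA_gen (m k : ℕ) (hm : m % 2 = 0) (h1 : 1 ≤ m) (hk : k ≤ m) :
    eAq m k = ∑ x ∈ range ((m+1)-k),
      (-1:ℚ)^x * (((m+1).choose x : ℕ):ℚ) * (((m:ℚ)-k)-x)^m := by
  have hfull : ∑ j ∈ range (m+2),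
      (-1:ℚ)^j * (((m+1).choose j : ℕ):ℚ) * ((k:ℚ)+1-j)^m = 0 := by
    have h := alt_shift m (m+1) (by omega) ((k:ℚ)+1) (-1)
    rw [← h]
    apply Finset.sum_congr rfl; intro j _
    ring_nf
  rw [eAq_eqQ, tail_eq m k hk _ hfull]
  rw [← Finset.sum_neg_distrib]
  apply Finset.sum_congr rfl
  intro x hx
  have hx' : x < (m+1) - k := mem_range.mp hx
  have hx2 : x ≤ m + 1 := by omega
  have hsign := neg_one_pow_sub' m x hx2 (by omega)
  have hchoose : (((m+1).choose (m+1-x) : ℕ):ℚ) = (((m+1).choose x : ℕ):ℚ) := by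
    norm_cast
    exact Nat.choose_symm hx2
  have hcast : (((m+1-x:ℕ)):ℚ) = (m:ℚ)+1-x := by
    rw [Nat.cast_sub hx2]; push_cast; ring
  rw [hsign, hchoose, hcast]
  have hbase : (k:ℚ)+1 - ((m:ℚ)+1-x) = -((((m:ℚ)-k)-x)) := by ring
  rw [hbase]
  have heven : Even m := Nat.even_iff.mpr hm
  rw [heven.neg_pow]
  ring

lemma eAq_diag (m : ℕ) (hm : m % 2 = 0) (h1 : 1 ≤ m) : eAq m m = 0 := by
  rw [symA_gen m m hm h1 le_rfl]
  have : (m+1) - m = 1 := by omega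
  rw [this, Finset.sum_range_one]
  have hz : (m:ℚ) - (m:ℚ) - ((0:ℕ):ℚ) = 0 := by push_cast; ring
  rw [hz, zero_pow (by omega : m ≠ 0)]
  ring

lemma symA (m k : ℕ) (hm : m % 2 = 0) (h1 : 1 ≤ m) (hk : k ≤ m - 1) :
    eAq m k = eAq m (m-1-k) := by
  rw [symA_gen m k hm h1 (by omega)]
  rw [eAq_eqQ]
  have hr1 : (m+1) - k = ((m-1-k)+1) + 1 := by omega
  rw [hr1, Finset.sum_range_succ]
  have hc : ((m-1-k:ℕ):ℚ) = (m:ℚ)-1-k := by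
    rw [Nat.cast_sub (by omega : k ≤ m - 1), Nat.cast_sub (by omega : 1 ≤ m)]
    push_cast; ring
  have hcast3 : ((m-1-k+1:ℕ):ℚ) = (m:ℚ)-k := by
    rw [Nat.cast_add, hc]; push_cast; ring
  rw [hcast3]
  have hz : (m:ℚ) - (k:ℚ) - ((m:ℚ)-(k:ℚ)) = 0 := by ring
  rw [hz, zero_pow (by omega : m ≠ 0), mul_zero, add_zero]
  apply Finset.sum_congr rfl
  intro x hx
  rw [hc]
  ring_nf



lemma eB_rec (m k : ℕ) (hk : k ≤ m) :
    eBq (m+1) (k+1) = (2*(k:ℚ)+3) * eBq m (k+1) + (2*((m:ℚ)-k)+1) * eBq m k := by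
  set D : ℕ → ℚ := fun j => if j = 0 then 0 else ((m+1).choose (j-1) : ℚ) with hD
  have hS2 : ∑ j ∈ range (k+2), (-1:ℚ)^j * D j * (2*((k:ℚ)+1-j)+1)^m = -eBq m k := by
    rw [Finset.sum_range_succ' (fun j => (-1:ℚ)^j * D j * (2*((k:ℚ)+1-j)+1)^m) (k+1)]
    have h0 : (-1:ℚ)^0 * D 0 * (2*((k:ℚ)+1-((0:ℕ):ℚ))+1)^m = 0 := by
      simp [hD]
    rw [h0, add_zero, eBq_eqQ]
    rw [← Finset.sum_neg_distrib]
    apply Finset.sum_congr rfl; intro j _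
    have hDj : D (j+1) = ((m+1).choose j : ℚ) := by simp [hD]
    rw [hDj]
    have : 2*((k:ℚ)+1-((j:ℚ)+1))+1 = 2*((k:ℚ)-j)+1 := by ring
    push_cast
    rw [this]
    ring
  rw [eBq_eqQ (m+1) (k+1), eBq_eqQ m (k+1)]
  push_cast
  have expand : ∀ j ∈ range (k+2),
      (-1:ℚ)^j * (((m+1+1).choose j : ℕ):ℚ) * (2*((k:ℚ)+1-j)+1)^(m+1)
      = (2*(k:ℚ)+3) * ((-1:ℚ)^j * (((m+1).choose j : ℕ):ℚ) * (2*((k:ℚ)+1-j)+1)^m)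
        - (2*((m:ℚ)-k)+1) * ((-1:ℚ)^j * D j * (2*((k:ℚ)+1-j)+1)^m) := by
    intro j hj
    have hj' : j ≤ k + 1 := Nat.lt_succ_iff.mp (mem_range.mp hj)
    have hP : (((m+1+1).choose j : ℕ):ℚ) = (((m+1).choose j : ℕ):ℚ) + D j := by
      cases j with
      | zero => simp [hD]
      | succ j' =>
        have : (m+1+1).choose (j'+1) = (m+1).choose j' + (m+1).choose (j'+1) := by
          exact Nat.choose_succ_succ' (m+1) j'
        rw [this]
        push_cast
        simp [hD]
        ring
    have hJ : (j:ℚ) * (((m+1).choose j : ℕ):ℚ) = ((m:ℚ)+2-j) * D j := by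
      cases j with
      | zero => simp [hD]
      | succ j' =>
        have hnat := Nat.choose_succ_right_eq (m+1) j'
        have hcast : ((m+1).choose (j'+1) : ℚ) * ((j':ℚ)+1)
            = ((m+1).choose j' : ℚ) * (((m+1-j' : ℕ)):ℚ) := by
          rw [← Nat.cast_succ, ← Nat.cast_mul, ← Nat.cast_mul, hnat]
        have hsub : (((m+1-j' : ℕ)):ℚ) = (m:ℚ)+1-j' := by
          rw [Nat.cast_sub (by omega : j' ≤ m + 1)]
          push_cast; ring
        rw [hsub] at hcast
        have hDj : D (j'+1) = ((m+1).choose j' : ℚ) := by simp [hD]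
        rw [hDj]
        push_cast
        linear_combination hcast
    set x : ℚ := 2*((k:ℚ)+1-j)+1 with hx
    rw [pow_succ]
    linear_combination ((-1:ℚ)^j * x^m * x) * hP + (-2*(-1:ℚ)^j * x^m) * hJ
  rw [Finset.sum_congr rfl expand, Finset.sum_sub_distrib, ← Finset.mul_sum, ← Finset.mul_sum, hS2]
  ring

lemma eA_rec (m k : ℕ) (hk : k ≤ m) :
    eAq (m+1) (k+1) = ((k:ℚ)+2) * eAq m (k+1) + ((m:ℚ)-k) * eAq m k := by
  set D : ℕ → ℚ := fun j => if j = 0 then 0 else ((m+1).choose (j-1) : ℚ) with hD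
  have hS2 : ∑ j ∈ range (k+2), (-1:ℚ)^j * D j * ((k:ℚ)+2-j)^m = -eAq m k := by
    rw [Finset.sum_range_succ' (fun j => (-1:ℚ)^j * D j * ((k:ℚ)+2-j)^m) (k+1)]
    have h0 : (-1:ℚ)^0 * D 0 * ((k:ℚ)+2-((0:ℕ):ℚ))^m = 0 := by
      simp [hD]
    rw [h0, add_zero, eAq_eqQ]
    rw [← Finset.sum_neg_distrib]
    apply Finset.sum_congr rfl; intro j _
    have hDj : D (j+1) = ((m+1).choose j : ℚ) := by simp [hD]
    rw [hDj]
    have : (k:ℚ)+2-((j:ℚ)+1) = (k:ℚ)+1-j := by ring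
    push_cast
    rw [this]
    ring
  rw [eAq_eqQ (m+1) (k+1), eAq_eqQ m (k+1)]
  push_cast
  have hb : ∀ j : ℕ, (k:ℚ)+1+1-(j:ℚ) = (k:ℚ)+2-j := by intro j; ring
  have expand : ∀ j ∈ range (k+2),
      (-1:ℚ)^j * (((m+1+1).choose j : ℕ):ℚ) * ((k:ℚ)+1+1-j)^(m+1)
      = ((k:ℚ)+2) * ((-1:ℚ)^j * (((m+1).choose j : ℕ):ℚ) * ((k:ℚ)+1+1-j)^m)
        - ((m:ℚ)-k) * ((-1:ℚ)^j * D j * ((k:ℚ)+2-j)^m) := by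
    intro j hj
    have hj' : j ≤ k + 1 := Nat.lt_succ_iff.mp (mem_range.mp hj)
    have hP : (((m+1+1).choose j : ℕ):ℚ) = (((m+1).choose j : ℕ):ℚ) + D j := by
      cases j with
      | zero => simp [hD]
      | succ j' =>
        have : (m+1+1).choose (j'+1) = (m+1).choose j' + (m+1).choose (j'+1) := by
          exact Nat.choose_succ_succ' (m+1) j'
        rw [this]
        push_cast
        simp [hD]
        ring
    have hJ : (j:ℚ) * (((m+1).choose j : ℕ):ℚ) = ((m:ℚ)+2-j) * D j := by
      cases j with
      | zero => simp [hD]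
      | succ j' =>
        have hnat := Nat.choose_succ_right_eq (m+1) j'
        have hcast : ((m+1).choose (j'+1) : ℚ) * ((j':ℚ)+1)
            = ((m+1).choose j' : ℚ) * (((m+1-j' : ℕ)):ℚ) := by
          rw [← Nat.cast_succ, ← Nat.cast_mul, ← Nat.cast_mul, hnat]
        have hsub : (((m+1-j' : ℕ)):ℚ) = (m:ℚ)+1-j' := by
          rw [Nat.cast_sub (by omega : j' ≤ m + 1)]
          push_cast; ring
        rw [hsub] at hcast
        have hDj : D (j'+1) = ((m+1).choose j' : ℚ) := by simp [hD]
        rw [hDj]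
        push_cast
        linear_combination hcast
    rw [hb j, pow_succ]
    set y : ℚ := (k:ℚ)+2-j with hy
    linear_combination ((-1:ℚ)^j * y^m * y) * hP + (-(-1:ℚ)^j * y^m) * hJ
  rw [Finset.sum_congr rfl expand, Finset.sum_sub_distrib, ← Finset.mul_sum, ← Finset.mul_sum, hS2]
  ring



lemma SB_eq (m : ℕ) :
    ∑ k ∈ range (m+2), (-1:ℚ)^k * eBq (m+1) k
      = -2 * ∑ k ∈ range (m+1), (-1:ℚ)^k * ((m:ℚ)-2*k) * eBq m k := by
  rw [Finset.sum_range_succ' (fun k => (-1:ℚ)^k * eBq (m+1) k) (m+1)]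
  have h0 : (-1:ℚ)^0 * eBq (m+1) 0 = 1 := by rw [eBq_zero]; norm_num
  rw [h0]
  have hrec : ∀ k ∈ range (m+1), (-1:ℚ)^(k+1) * eBq (m+1) (k+1)
      = (-1:ℚ)^(k+1) * ((2*(k:ℚ)+3) * eBq m (k+1))
        + (-1:ℚ)^(k+1) * ((2*((m:ℚ)-k)+1) * eBq m k) := by
    intro k hk
    rw [eB_rec m k (Nat.lt_succ_iff.mp (mem_range.mp hk))]
    ring
  rw [Finset.sum_congr rfl hrec, Finset.sum_add_distrib]
  have hS1 : ∑ k ∈ range (m+1), (-1:ℚ)^(k+1) * ((2*(k:ℚ)+3) * eBq m (k+1))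
      = ∑ k ∈ range (m+1), (-1:ℚ)^k * (2*(k:ℚ)+1) * eBq m k - 1 := by
    have h := Finset.sum_range_succ' (fun k => (-1:ℚ)^k * (2*(k:ℚ)+1) * eBq m k) (m+1)
    have htop := Finset.sum_range_succ (fun k => (-1:ℚ)^k * (2*(k:ℚ)+1) * eBq m k) (m+1)
    rw [htop, eBq_top, mul_zero, add_zero] at h
    have h00 : (-1:ℚ)^0 * (2*((0:ℕ):ℚ)+1) * eBq m 0 = 1 := by
      rw [eBq_zero]; norm_num
    rw [h00] at h
    have hterm : ∀ k ∈ range (m+1), (-1:ℚ)^(k+1) * (2*(((k+1:ℕ)):ℚ)+1) * eBq m (k+1)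
        = (-1:ℚ)^(k+1) * ((2*(k:ℚ)+3) * eBq m (k+1)) := by
      intro k _
      push_cast
      ring
    rw [Finset.sum_congr rfl hterm] at h
    linarith
  rw [hS1]
  have hcomb : ∑ k ∈ range (m+1), (-1:ℚ)^k * (2*(k:ℚ)+1) * eBq m k
      + ∑ k ∈ range (m+1), (-1:ℚ)^(k+1) * ((2*((m:ℚ)-k)+1) * eBq m k)
      = ∑ k ∈ range (m+1), -2 * ((-1:ℚ)^k * ((m:ℚ)-2*k) * eBq m k) := by
    rw [← Finset.sum_add_distrib]
    apply Finset.sum_congr rfl; intro k _; ring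
  rw [Finset.mul_sum]
  linarith [hcomb]

lemma SA_eq (m : ℕ) :
    ∑ k ∈ range (m+2), (-1:ℚ)^k * eAq (m+1) k
      = ∑ k ∈ range (m+1), (-1:ℚ)^k * (2*(k:ℚ)+1-(m:ℚ)) * eAq m k := by
  rw [Finset.sum_range_succ' (fun k => (-1:ℚ)^k * eAq (m+1) k) (m+1)]
  have h0 : (-1:ℚ)^0 * eAq (m+1) 0 = 1 := by rw [eAq_zero]; norm_num
  rw [h0]
  have hrec : ∀ k ∈ range (m+1), (-1:ℚ)^(k+1) * eAq (m+1) (k+1)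
      = (-1:ℚ)^(k+1) * (((k:ℚ)+2) * eAq m (k+1))
        + (-1:ℚ)^(k+1) * (((m:ℚ)-k) * eAq m k) := by
    intro k hk
    rw [eA_rec m k (Nat.lt_succ_iff.mp (mem_range.mp hk))]
    ring
  rw [Finset.sum_congr rfl hrec, Finset.sum_add_distrib]
  have hS1 : ∑ k ∈ range (m+1), (-1:ℚ)^(k+1) * (((k:ℚ)+2) * eAq m (k+1))
      = ∑ k ∈ range (m+1), (-1:ℚ)^k * ((k:ℚ)+1) * eAq m k - 1 := by
    have h := Finset.sum_range_succ' (fun k => (-1:ℚ)^k * ((k:ℚ)+1) * eAq m k) (m+1)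
    have htop := Finset.sum_range_succ (fun k => (-1:ℚ)^k * ((k:ℚ)+1) * eAq m k) (m+1)
    rw [htop, eAq_top, mul_zero, add_zero] at h
    have h00 : (-1:ℚ)^0 * (((0:ℕ):ℚ)+1) * eAq m 0 = 1 := by
      rw [eAq_zero]; norm_num
    rw [h00] at h
    have hterm : ∀ k ∈ range (m+1), (-1:ℚ)^(k+1) * ((((k+1:ℕ)):ℚ)+1) * eAq m (k+1)
        = (-1:ℚ)^(k+1) * (((k:ℚ)+2) * eAq m (k+1)) := by
      intro k _
      push_cast
      ring
    rw [Finset.sum_congr rfl hterm] at h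
    linarith
  rw [hS1]
  have hcomb : ∑ k ∈ range (m+1), (-1:ℚ)^k * ((k:ℚ)+1) * eAq m k
      + ∑ k ∈ range (m+1), (-1:ℚ)^(k+1) * (((m:ℚ)-k) * eAq m k)
      = ∑ k ∈ range (m+1), (-1:ℚ)^k * (2*(k:ℚ)+1-(m:ℚ)) * eAq m k := by
    rw [← Finset.sum_add_distrib]
    apply Finset.sum_congr rfl; intro k _; ring
  linarith [hcomb]

lemma half_sum (n : ℕ) (t : ℕ → ℚ) (hsym : ∀ k, k < n → t (2*n-1-k) = t k) :
    ∑ k ∈ range (2*n), t k = 2 * ∑ k ∈ range n, t k := by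
  have h2n : 2*n = n + n := by omega
  rw [h2n, Finset.sum_range_add]
  have hr : ∑ x ∈ range n, t (n + x) = ∑ k ∈ range n, t k := by
    rw [← Finset.sum_range_reflect (fun x => t (n + x)) n]
    apply Finset.sum_congr rfl
    intro x hx
    have hx' : x < n := mem_range.mp hx
    have hidx : n + (n - 1 - x) = 2*n-1-x := by omega
    rw [hidx, hsym x hx']
  rw [hr]
  ring

lemma innerSum_zero (n k : ℕ) : innerSum n k 0 = ((2*n-2*k-1 : ℕ) : ℤ) := by
  unfold innerSum
  have he : ∀ i ∈ range (k+1), (if i ≤ 0 then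
      (-1 : ℤ)^i * (k.choose i) * ((2*n-2*k-1).choose (2*(0-i)+1)) else 0)
      = (if i = 0 then ((2*n-2*k-1 : ℕ) : ℤ) else 0) := by
    intro i _
    by_cases h : i = 0
    · subst h
      simp [Nat.choose_one_right]
    · rw [if_neg (by omega), if_neg h]
  rw [Finset.sum_congr rfl he, Finset.sum_ite_eq' (range (k+1)) 0
    (fun _ => ((2*n-2*k-1 : ℕ) : ℤ))]
  rw [if_pos (mem_range.mpr (by omega))]

lemma CB_cast (n : ℕ) (hn : 1 ≤ n) : (CB n 0 : ℚ)
    = ∑ k ∈ range n, (-1:ℚ)^k * (((2*n-1:ℕ):ℚ)-2*(k:ℚ)) * eBq (2*n-1) k := by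
  unfold CB
  push_cast
  apply Finset.sum_congr rfl
  intro k hk
  have hk' : k < n := mem_range.mp hk
  rw [innerSum_zero]
  have hcast : ((2*n-2*k-1 : ℕ):ℚ) = ((2*n-1:ℕ):ℚ) - 2*(k:ℚ) := by
    rw [Nat.cast_sub (by omega : 1 ≤ 2*n - 2*k)]
    rw [Nat.cast_sub (by omega : 2*k ≤ 2*n)]
    rw [Nat.cast_sub (by omega : 1 ≤ 2*n)]
    push_cast
    ring
  push_cast
  rw [hcast]
  unfold eBq
  push_cast
  ring

lemma CA_cast (n : ℕ) (hn : 1 ≤ n) : (CA n 0 : ℚ)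
    = ∑ k ∈ range n, (-1:ℚ)^k * (((2*n:ℕ):ℚ)-1-2*(k:ℚ)) * eAq (2*n) k := by
  unfold CA
  push_cast
  apply Finset.sum_congr rfl
  intro k hk
  have hk' : k < n := mem_range.mp hk
  rw [innerSum_zero]
  have hcast : ((2*n-2*k-1 : ℕ):ℚ) = ((2*n:ℕ):ℚ) - 1 - 2*(k:ℚ) := by
    rw [Nat.cast_sub (by omega : 1 ≤ 2*n - 2*k)]
    rw [Nat.cast_sub (by omega : 2*k ≤ 2*n)]
    push_cast
    ring
  push_cast
  rw [hcast]
  unfold eAq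
  push_cast
  ring

lemma CB_val (n : ℕ) (hn : 1 ≤ n) :
    (CB n 0 : ℚ) = -(2:ℚ)^(2*n) * secantE (2*n) / 4 := by
  have hfull : ∑ k ∈ range (2*n+1), (-1:ℚ)^k * eBq (2*n) k
      = 2^(2*n) * secantE (2*n) := by
    rw [← SB_eval (2*n)]
    apply Finset.sum_congr rfl
    intro k _
    rw [eBq_eq]
  have h2 := SB_eq (2*n-1)
  rw [show 2*n-1+2 = 2*n+1 by omega, show 2*n-1+1 = 2*n by omega] at h2
  set t : ℕ → ℚ := fun k => (-1:ℚ)^k * (((2*n-1:ℕ):ℚ)-2*(k:ℚ)) * eBq (2*n-1) k with ht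
  have hsym : ∀ k, k < n → t (2*n-1-k) = t k := by
    intro k hk
    have hsign : (-1:ℚ)^(2*n-1-k) = -(-1:ℚ)^k := by
      have h := neg_one_pow_sub' (2*n-2) k (by omega) (by omega)
      rw [show 2*n-2+1 = 2*n-1 by omega] at h
      exact h
    have hc1 : ((2*n-1-k:ℕ):ℚ) = ((2*n-1:ℕ):ℚ) - (k:ℚ) := by
      rw [Nat.cast_sub (by omega : k ≤ 2*n-1)]
    have hsB : eBq (2*n-1) (2*n-1-k) = eBq (2*n-1) k :=
      (symB (2*n-1) k (by omega) (by omega)).symm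
    show (-1:ℚ)^(2*n-1-k) * (((2*n-1:ℕ):ℚ)-2*((2*n-1-k:ℕ):ℚ)) * eBq (2*n-1) (2*n-1-k)
      = (-1:ℚ)^k * (((2*n-1:ℕ):ℚ)-2*(k:ℚ)) * eBq (2*n-1) k
    rw [hsign, hc1, hsB]
    have hc2 : ((2*n-1:ℕ):ℚ) = 2*(n:ℚ)-1 := by
      rw [Nat.cast_sub (by omega : 1 ≤ 2*n)]; push_cast; ring
    rw [hc2]
    ring
  have hhalf := half_sum n t hsym
  have hCB := CB_cast n hn
  have hW : ∑ k ∈ range (2*n), (-1:ℚ)^k * (((2*n-1:ℕ):ℚ)-2*(k:ℚ)) * eBq (2*n-1) k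
      = ∑ k ∈ range (2*n), t k := by
    apply Finset.sum_congr rfl; intro k _; rfl
  have hcastm : ∀ k : ℕ, (-1:ℚ)^k * (((2*n-1:ℕ):ℚ)-2*(k:ℚ)) * eBq (2*n-1) k
      = (-1:ℚ)^k * (((2*n-1:ℕ):ℚ)-2*(k:ℚ)) * eBq (2*n-1) k := fun _ => rfl
  -- h2 RHS weight uses ((2*n-1 : ℕ):ℚ) ?
  have h2' : ∑ k ∈ range (2*n+1), (-1:ℚ)^k * eBq (2*n) k
      = -2 * ∑ k ∈ range (2*n), t k := by
    rw [h2, hW.symm]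
  rw [hfull, hhalf] at h2'
  have : (CB n 0 : ℚ) = ∑ k ∈ range n, t k := hCB
  rw [this]
  linarith

lemma CA_val (n : ℕ) (hn : 1 ≤ n) :
    (CA n 0 : ℚ) = -(2:ℚ)^(2*n) * eQ (2*n+1) := by
  have hfull : ∑ k ∈ range (2*n+1+1), (-1:ℚ)^k * eAq (2*n+1) k
      = 2^(2*n+1) * eQ (2*n+1) := by
    rw [← SA_eval (2*n+1)]
    apply Finset.sum_congr rfl
    intro k _
    rw [eAq_eq]
  have h2 := SA_eq (2*n)
  rw [Finset.sum_range_succ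
    (fun k => (-1:ℚ)^k * (2*(k:ℚ)+1-((2*n:ℕ):ℚ)) * eAq (2*n) k) (2*n)] at h2
  have htop : (-1:ℚ)^(2*n) * (2*((2*n:ℕ):ℚ)+1-((2*n:ℕ):ℚ)) * eAq (2*n) (2*n) = 0 := by
    rw [eAq_diag (2*n) (by omega) (by omega)]
    ring
  rw [htop, add_zero] at h2
  set tA : ℕ → ℚ := fun k => (-1:ℚ)^k * (((2*n:ℕ):ℚ)-1-2*(k:ℚ)) * eAq (2*n) k with htA
  have hneg : ∑ k ∈ range (2*n), (-1:ℚ)^k * (2*(k:ℚ)+1-((2*n:ℕ):ℚ)) * eAq (2*n) k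
      = -∑ k ∈ range (2*n), tA k := by
    rw [← Finset.sum_neg_distrib]
    apply Finset.sum_congr rfl
    intro k _
    show (-1:ℚ)^k * (2*(k:ℚ)+1-((2*n:ℕ):ℚ)) * eAq (2*n) k
      = -((-1:ℚ)^k * (((2*n:ℕ):ℚ)-1-2*(k:ℚ)) * eAq (2*n) k)
    ring
  rw [hneg] at h2
  have hsym : ∀ k, k < n → tA (2*n-1-k) = tA k := by
    intro k hk
    have hsign : (-1:ℚ)^(2*n-1-k) = -(-1:ℚ)^k := by
      have h := neg_one_pow_sub' (2*n-2) k (by omega) (by omega)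
      rw [show 2*n-2+1 = 2*n-1 by omega] at h
      exact h
    have hc1 : ((2*n-1-k:ℕ):ℚ) = ((2*n-1:ℕ):ℚ) - (k:ℚ) := by
      rw [Nat.cast_sub (by omega : k ≤ 2*n-1)]
    have hsA : eAq (2*n) (2*n-1-k) = eAq (2*n) k :=
      (symA (2*n) k (by omega) (by omega) (by omega)).symm
    show (-1:ℚ)^(2*n-1-k) * (((2*n:ℕ):ℚ)-1-2*((2*n-1-k:ℕ):ℚ)) * eAq (2*n) (2*n-1-k)
      = (-1:ℚ)^k * (((2*n:ℕ):ℚ)-1-2*(k:ℚ)) * eAq (2*n) k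
    rw [hsign, hc1, hsA]
    have hc2 : ((2*n-1:ℕ):ℚ) = 2*(n:ℚ)-1 := by
      rw [Nat.cast_sub (by omega : 1 ≤ 2*n)]; push_cast; ring
    have hc3 : ((2*n:ℕ):ℚ) = 2*(n:ℚ) := by push_cast; ring
    rw [hc2, hc3]
    ring
  have hhalf := half_sum n tA hsym
  have hCA : (CA n 0 : ℚ) = ∑ k ∈ range n, tA k := CA_cast n hn
  rw [hfull, hhalf] at h2
  have hpow : (2:ℚ)^(2*n+1) = 2 * 2^(2*n) := by ring
  rw [hCA]
  rw [hpow] at h2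
  linarith


end VAZ

theorem values_at_zero (n : ℕ) (hn : 1 ≤ n) :
    Xi n 0 = (-1 : ℝ) ^ n * (secantE (2 * n) : ℝ) /
      (2 ^ (2 * n) * (Nat.factorial (2 * n - 1))) ∧
    Lam n 0 = (-1 : ℝ) ^ n * 2 ^ (2 * n + 2) * (2 ^ (2 * n + 2) - 1) *
      ((bernoulli (2 * n + 2) : ℚ) : ℝ) /
      ((2 ^ (2 * n + 1) - 1) * (2 * n + 2) * (Nat.factorial (2 * n))) := by
  constructor
  · unfold Xi
    have hsum : ∑ t ∈ range n, (CB n t : ℝ) * (0:ℝ)^(2*t) = (CB n 0 : ℝ) := by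
      rw [Finset.sum_eq_single_of_mem 0 (mem_range.mpr (by omega))]
      · norm_num
      · intro t _ ht
        rw [zero_pow (by omega : 2*t ≠ 0), mul_zero]
    rw [hsum]
    have hq := VAZ.CB_val n hn
    have hr : (CB n 0 : ℝ) = -(2:ℝ)^(2*n) * ((secantE (2*n) : ℚ):ℝ) / 4 := by
      have h := congrArg (fun q : ℚ => (q : ℝ)) hq
      push_cast at h
      exact h
    rw [hr]
    have hF : ((Nat.factorial (2*n-1) : ℕ) : ℝ) ≠ 0 :=
      Nat.cast_ne_zero.mpr (Nat.factorial_ne_zero _)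
    have h4 : (2:ℝ)^(2*n) * (2:ℝ)^(2*n) = (2:ℝ)^(4*n-2) * 4 := by
      rw [← pow_add, show 2*n+2*n = (4*n-2)+2 by omega, pow_add]
      norm_num
    have hp1 : (2:ℝ)^(4*n-2) ≠ 0 := by positivity
    have hp2 : (2:ℝ)^(2*n) ≠ 0 := by positivity
    field_simp
    linear_combination (((-1:ℝ)^n * ((secantE (2*n) : ℚ):ℝ))) * h4
  · unfold Lam
    have hsum : ∑ t ∈ range n, (CA n t : ℝ) * (0:ℝ)^(2*t) = (CA n 0 : ℝ) := by
      rw [Finset.sum_eq_single_of_mem 0 (mem_range.mpr (by omega))]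
      · norm_num
      · intro t _ ht
        rw [zero_pow (by omega : 2*t ≠ 0), mul_zero]
    rw [hsum]
    have hq := VAZ.CA_val n hn
    have heq : VAZ.eQ (2*n+1) = 2*(2^(2*n+2)-1)*bernoulli (2*n+2)/(((2*n+1:ℕ):ℚ)+1) := by
      unfold VAZ.eQ
      rw [if_neg (by omega)]
    rw [heq] at hq
    have hr : (CA n 0 : ℝ) = -(2:ℝ)^(2*n) *
        (2*(2^(2*n+2)-1)*((bernoulli (2*n+2) : ℚ):ℝ)/(2*(n:ℝ)+2)) := by
      have h := congrArg (fun q : ℚ => (q : ℝ)) hq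
      push_cast at h
      rw [h]
      ring
    rw [hr]
    have hF : ((Nat.factorial (2*n) : ℕ) : ℝ) ≠ 0 :=
      Nat.cast_ne_zero.mpr (Nat.factorial_ne_zero _)
    have hp1 : (2:ℝ)^(2*n+1) - 1 ≠ 0 := by
      have : (1:ℝ) < 2^(2*n+1) := by
        apply one_lt_pow₀ (by norm_num : (1:ℝ) < 2) (by omega)
      linarith
    have hp2 : (2*(n:ℝ)+2) ≠ 0 := by positivity
    field_simp
    ring
end

section
/- For every integer n ≥ 1, Ξ_n(1) = (−1)^{n+1}/(2^{2n}(2n−1)!) and Λ_n(1) = (−1)^{n+1}·2^{2n−1}/((2^{2n+1}−1)(2n)!). -/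
open Finset

lemma pairsum (f : ℕ → ℕ) (a : ℕ) :
    ∑ s ∈ Finset.range a, (f (2*s) + f (2*s+1)) = ∑ j ∈ Finset.range (2*a), f j := by
  induction a with
  | zero => simp
  | succ a ih =>
    rw [Finset.sum_range_succ, ih, Nat.mul_succ,
      show 2*a+2 = (2*a+1)+1 from rfl, Finset.sum_range_succ, Finset.sum_range_succ]
    ring

lemma odd_choose_sum (a : ℕ) :
    ∑ s ∈ Finset.range (a+1), (2*a+1).choose (2*s+1) = 2^(2*a) := by
  have h : ∀ s, (2*a+1).choose (2*s+1) = (2*a).choose (2*s) + (2*a).choose (2*s+1) := by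
    intro s
    exact Nat.choose_succ_succ (2*a) (2*s)
  calc ∑ s ∈ Finset.range (a+1), (2*a+1).choose (2*s+1)
      = ∑ s ∈ Finset.range (a+1), ((2*a).choose (2*s) + (2*a).choose (2*s+1)) :=
        Finset.sum_congr rfl (fun s _ => h s)
    _ = ∑ j ∈ Finset.range (2*(a+1)), (2*a).choose j := pairsum _ _
    _ = ∑ j ∈ Finset.range (2*a+1), (2*a).choose j + (2*a).choose (2*a+1) := by
        rw [show 2*(a+1) = (2*a+1)+1 by ring, Finset.sum_range_succ]
    _ = 2^(2*a) := by
        rw [Nat.sum_range_choose, Nat.choose_eq_zero_of_lt (by omega)]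
        simp

lemma odd_choose_sum' (a m : ℕ) (h : a+1 ≤ m) :
    ∑ s ∈ Finset.range m, ((2*a+1).choose (2*s+1) : ℤ) = 2^(2*a) := by
  have := Finset.sum_subset (Finset.range_subset_range.mpr h)
    (f := fun s => ((2*a+1).choose (2*s+1) : ℤ))
    (by intro s _ hs
        simp only [Finset.mem_range, not_lt] at hs
        simp [Nat.choose_eq_zero_of_lt (show 2*a+1 < 2*s+1 by omega)])
  rw [← this]
  exact_mod_cast odd_choose_sum a

lemma innerSum_total (n k : ℕ) (hkn : k < n) :
    ∑ t ∈ Finset.range n, innerSum n k t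
      = (∑ i ∈ Finset.range (k+1), (-1:ℤ)^i * (k.choose i)) * 2^(2*(n-k-1)) := by
  unfold innerSum
  rw [Finset.sum_comm, Finset.sum_mul]
  refine Finset.sum_congr rfl ?_
  intro i hi
  simp only [Finset.mem_range] at hi
  have hik : i ≤ k := by omega
  have h1 : ∑ t ∈ Finset.range n,
      (if i ≤ t then
        (-1 : ℤ) ^ i * (Nat.choose k i) * (Nat.choose (2 * n - 2 * k - 1) (2 * (t - i) + 1))
      else 0)
      = ∑ t ∈ Finset.Ico i n,
        (-1 : ℤ) ^ i * (Nat.choose k i) * (Nat.choose (2 * n - 2 * k - 1) (2 * (t - i) + 1)) := by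
    rw [← Finset.sum_filter]
    congr 1
    ext t
    simp only [Finset.mem_filter, Finset.mem_range, Finset.mem_Ico]
    tauto
  rw [h1, Finset.sum_Ico_eq_sum_range]
  have h2 : ∀ s, i + s - i = s := fun s => by omega
  have h3 : 2 * n - 2 * k - 1 = 2 * (n - k - 1) + 1 := by omega
  simp only [h2, h3, ← Finset.mul_sum]
  rw [odd_choose_sum' (n - k - 1) (n - i) (by omega)]

lemma sum_CB (n : ℕ) (hn : 1 ≤ n) :
    ∑ t ∈ Finset.range n, CB n t = 2^(2*(n-1)) := by
  unfold CB
  rw [Finset.sum_comm]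
  have key : ∀ k ∈ Finset.range n,
      ∑ t ∈ Finset.range n, eulerianB (2 * n - 1) k * (-1) ^ k * innerSum n k t
        = if k = 0 then eulerianB (2*n-1) 0 * 2^(2*(n-1)) else 0 := by
    intro k hk
    simp only [Finset.mem_range] at hk
    rw [← Finset.mul_sum, innerSum_total n k hk, Int.alternating_sum_range_choose]
    by_cases h : k = 0
    · subst h; simp
    · simp [h]
  rw [Finset.sum_congr rfl key, Finset.sum_ite_eq' (Finset.range n) 0]
  have : eulerianB (2*n-1) 0 = 1 := by
    unfold eulerianB; simp
  simp [Finset.mem_range, hn, this]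
  omega

lemma sum_CA (n : ℕ) (hn : 1 ≤ n) :
    ∑ t ∈ Finset.range n, CA n t = 2^(2*(n-1)) := by
  unfold CA
  rw [Finset.sum_comm]
  have key : ∀ k ∈ Finset.range n,
      ∑ t ∈ Finset.range n, eulerianA (2 * n) k * (-1) ^ k * innerSum n k t
        = if k = 0 then eulerianA (2*n) 0 * 2^(2*(n-1)) else 0 := by
    intro k hk
    simp only [Finset.mem_range] at hk
    rw [← Finset.mul_sum, innerSum_total n k hk, Int.alternating_sum_range_choose]
    by_cases h : k = 0
    · subst h; simp
    · simp [h]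
  rw [Finset.sum_congr rfl key, Finset.sum_ite_eq' (Finset.range n) 0]
  have : eulerianA (2*n) 0 = 1 := by
    unfold eulerianA; simp
  simp [Finset.mem_range, hn, this]
  omega

theorem values_at_one (n : ℕ) (hn : 1 ≤ n) :
    Xi n 1 = (-1 : ℝ) ^ (n + 1) / (2 ^ (2 * n) * (Nat.factorial (2 * n - 1))) ∧
    Lam n 1 = (-1 : ℝ) ^ (n + 1) * 2 ^ (2 * n - 1) /
      ((2 ^ (2 * n + 1) - 1) * (Nat.factorial (2 * n))) := by
  have hB : ∑ t ∈ Finset.range n, (CB n t : ℝ) = 2^(2*(n-1)) := by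
    rw [← Int.cast_sum, sum_CB n hn]; push_cast; rfl
  have hA : ∑ t ∈ Finset.range n, (CA n t : ℝ) = 2^(2*(n-1)) := by
    rw [← Int.cast_sum, sum_CA n hn]; push_cast; rfl
  have hf : ((2*n-1).factorial : ℝ) ≠ 0 := by positivity
  have hf2 : ((2*n).factorial : ℝ) ≠ 0 := by positivity
  have hd : (2:ℝ)^(2*n+1) - 1 ≠ 0 := by
    have : (2:ℝ)^(2*n+1) ≥ 2^1 := by
      apply pow_le_pow_right₀ (by norm_num); omega
    norm_num at this ⊢; linarith
  constructor
  · unfold Xi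
    simp only [one_pow, mul_one, hB]
    have h4 : 4*n-2 = 2*n + 2*(n-1) := by omega
    rw [h4, pow_add]
    field_simp
    ring
  · unfold Lam
    simp only [one_pow, mul_one, hA]
    have h4 : 2*n-1 = 1 + 2*(n-1) := by omega
    rw [h4, pow_add]
    field_simp
    ring
end

section
/- For every integer n ≥ 1 and every real x > 1, one has (−1)^{n+1}·Ξ_n(x) > 0 and (−1)^{n+1}·Λ_n(x) > 0. In particular, since Ξ_n and Λ_n are even, neither polynomial has a real zero outside the interval [−1,1]. -/
open Finset

lemma eulA_zero (m : ℕ) : eulerianA m 0 = 1 := by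
  simp [eulerianA]

lemma eulB_zero (m : ℕ) : eulerianB m 0 = 1 := by
  simp [eulerianB]

lemma eulA_step (m k : ℕ) :
    eulerianA (m + 1) (k + 1)
      = ((k : ℤ) + 2) * eulerianA m (k + 1) + ((m : ℤ) - k) * eulerianA m k := by
  unfold eulerianA
  rw [Finset.sum_range_succ' (fun j => (-1 : ℤ) ^ j * (Nat.choose (m + 1 + 1) j) * ((k + 1 + 1 - j : ℕ) ^ (m+1) : ℤ))]
  rw [Finset.sum_range_succ' (fun j => (-1 : ℤ) ^ j * (Nat.choose (m + 1) j) * ((k + 1 + 1 - j : ℕ) ^ m : ℤ))]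
  have key : ∀ i ∈ Finset.range (k + 1),
      (-1 : ℤ) ^ (i+1) * (Nat.choose (m + 2) (i+1)) * ((k + 2 - (i+1) : ℕ) ^ (m+1) : ℤ)
      = ((k:ℤ)+2) * ((-1 : ℤ) ^ (i+1) * (Nat.choose (m + 1) (i+1)) * ((k + 2 - (i+1) : ℕ) ^ m : ℤ))
        + ((m:ℤ)-k) * ((-1 : ℤ) ^ i * (Nat.choose (m + 1) i) * ((k + 1 - i : ℕ) ^ m : ℤ)) := by
    intro i hi
    rw [Finset.mem_range] at hi
    have hik : i ≤ k := Nat.lt_succ_iff.mp hi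
    have hsub : (k + 2 - (i+1) : ℕ) = k + 1 - i := by omega
    have hcast : ((k + 1 - i : ℕ) : ℤ) = (k : ℤ) + 1 - i := by
      have : i ≤ k + 1 := by omega
      push_cast [this]; ring
    have h1 : ((m:ℤ) + 2) * (Nat.choose (m+1) i) = (Nat.choose (m+2) (i+1)) * ((i:ℤ)+1) := by
      exact_mod_cast congrArg (Nat.cast : ℕ → ℤ) (Nat.add_one_mul_choose_eq (m+1) i)
    have h2 : ((Nat.choose (m+2) (i+1) : ℕ) : ℤ) = (Nat.choose (m+1) i) + (Nat.choose (m+1) (i+1)) := by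
      exact_mod_cast congrArg (Nat.cast : ℕ → ℤ) (Nat.choose_succ_succ (m+1) i)
    rw [hsub]
    have hpow : (((k + 1 - i : ℕ) : ℤ)) ^ (m+1) = ((k:ℤ)+1-i) * ((k + 1 - i : ℕ) : ℤ) ^ m := by
      rw [pow_succ]; rw [hcast]; ring
    rw [hpow]
    have hkey : ((k:ℤ)+1-i) * (Nat.choose (m+2) (i+1)) =
        ((k:ℤ)+2) * (Nat.choose (m+1) (i+1)) + ((k:ℤ)-m) * (Nat.choose (m+1) i) := by
      linear_combination h1 + ((k:ℤ)+2) * h2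
    calc (-1 : ℤ) ^ (i+1) * (Nat.choose (m + 2) (i+1)) * (((k:ℤ)+1-i) * ((k + 1 - i : ℕ) : ℤ) ^ m)
        = (((k:ℤ)+1-i) * (Nat.choose (m+2) (i+1))) * ((-1:ℤ)^(i+1) * ((k + 1 - i : ℕ) : ℤ) ^ m) := by ring
      _ = (((k:ℤ)+2) * (Nat.choose (m+1) (i+1)) + ((k:ℤ)-m) * (Nat.choose (m+1) i)) * ((-1:ℤ)^(i+1) * ((k + 1 - i : ℕ) : ℤ) ^ m) := by rw [hkey]
      _ = _ := by rw [pow_succ]; ring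
  rw [Finset.sum_congr rfl key, Finset.sum_add_distrib, ← Finset.mul_sum, ← Finset.mul_sum]
  have hz : (k + 2 - 0 : ℕ) = k + 2 := rfl
  simp only [Nat.choose_zero_right, pow_zero, Nat.sub_zero]
  push_cast
  ring

lemma eulB_step (m k : ℕ) :
    eulerianB (m + 1) (k + 1)
      = (2*(k : ℤ) + 3) * eulerianB m (k + 1) + (2*(m : ℤ) + 1 - 2*k) * eulerianB m k := by
  unfold eulerianB
  rw [Finset.sum_range_succ' (fun j => (-1 : ℤ) ^ j * (Nat.choose (m + 1 + 1) j) * ((2 * (k + 1 - j) + 1 : ℕ) ^ (m+1) : ℤ))]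
  rw [Finset.sum_range_succ' (fun j => (-1 : ℤ) ^ j * (Nat.choose (m + 1) j) * ((2 * (k + 1 - j) + 1 : ℕ) ^ m : ℤ))]
  have key : ∀ i ∈ Finset.range (k + 1),
      (-1 : ℤ) ^ (i+1) * (Nat.choose (m + 2) (i+1)) * ((2 * (k + 1 - (i+1)) + 1 : ℕ) ^ (m+1) : ℤ)
      = (2*(k:ℤ)+3) * ((-1 : ℤ) ^ (i+1) * (Nat.choose (m + 1) (i+1)) * ((2 * (k + 1 - (i+1)) + 1 : ℕ) ^ m : ℤ))
        + (2*(m:ℤ)+1-2*k) * ((-1 : ℤ) ^ i * (Nat.choose (m + 1) i) * ((2 * (k - i) + 1 : ℕ) ^ m : ℤ)) := by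
    intro i hi
    rw [Finset.mem_range] at hi
    have hik : i ≤ k := Nat.lt_succ_iff.mp hi
    have hsub : (k + 1 - (i+1) : ℕ) = k - i := by omega
    have hcast : ((2 * (k - i) + 1 : ℕ) : ℤ) = 2*(k : ℤ) + 1 - 2*i := by
      push_cast [hik]; ring
    have h1 : ((m:ℤ) + 2) * (Nat.choose (m+1) i) = (Nat.choose (m+2) (i+1)) * ((i:ℤ)+1) := by
      exact_mod_cast congrArg (Nat.cast : ℕ → ℤ) (Nat.add_one_mul_choose_eq (m+1) i)
    have h2 : ((Nat.choose (m+2) (i+1) : ℕ) : ℤ) = (Nat.choose (m+1) i) + (Nat.choose (m+1) (i+1)) := by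
      exact_mod_cast congrArg (Nat.cast : ℕ → ℤ) (Nat.choose_succ_succ (m+1) i)
    rw [hsub]
    have hpow : (((2 * (k - i) + 1 : ℕ) : ℤ)) ^ (m+1) = (2*(k:ℤ)+1-2*i) * ((2 * (k - i) + 1 : ℕ) : ℤ) ^ m := by
      rw [pow_succ, hcast]; ring
    rw [hpow]
    have hkey : (2*(k:ℤ)+1-2*i) * (Nat.choose (m+2) (i+1)) =
        (2*(k:ℤ)+3) * (Nat.choose (m+1) (i+1)) + (2*(k:ℤ)-2*m-1) * (Nat.choose (m+1) i) := by
      linear_combination 2*h1 + (2*(k:ℤ)+3) * h2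
    calc (-1 : ℤ) ^ (i+1) * (Nat.choose (m + 2) (i+1)) * ((2*(k:ℤ)+1-2*i) * ((2 * (k - i) + 1 : ℕ) : ℤ) ^ m)
        = ((2*(k:ℤ)+1-2*i) * (Nat.choose (m+2) (i+1))) * ((-1:ℤ)^(i+1) * ((2 * (k - i) + 1 : ℕ) : ℤ) ^ m) := by ring
      _ = ((2*(k:ℤ)+3) * (Nat.choose (m+1) (i+1)) + (2*(k:ℤ)-2*m-1) * (Nat.choose (m+1) i)) * ((-1:ℤ)^(i+1) * ((2 * (k - i) + 1 : ℕ) : ℤ) ^ m) := by rw [hkey]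
      _ = _ := by rw [pow_succ]; ring
  rw [Finset.sum_congr rfl key, Finset.sum_add_distrib, ← Finset.mul_sum, ← Finset.mul_sum]
  simp only [Nat.choose_zero_right, pow_zero, Nat.sub_zero]
  push_cast
  ring

lemma alt_base (k : ℕ) :
    (∑ j ∈ Finset.range (k + 1), (-1 : ℤ) ^ j * (Nat.choose 1 j)) = if k = 0 then 1 else 0 := by
  induction k with
  | zero => simp
  | succ k ih =>
    rw [Finset.sum_range_succ, ih]
    rcases Nat.eq_zero_or_pos k with hk | hk
    · subst hk; norm_num
    · have : Nat.choose 1 (k+1) = 0 := Nat.choose_eq_zero_of_lt (by omega)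
      simp [this, Nat.pos_iff_ne_zero.mp hk]

lemma eulA_base (k : ℕ) : eulerianA 0 k = if k = 0 then 1 else 0 := by
  rw [← alt_base k]; simp [eulerianA]

lemma eulB_base (k : ℕ) : eulerianB 0 k = if k = 0 then 1 else 0 := by
  rw [← alt_base k]; simp [eulerianB]

lemma eulA_nonneg_van (m : ℕ) : ∀ k, 0 ≤ eulerianA m k ∧ (m < k → eulerianA m k = 0) := by
  induction m with
  | zero =>
    intro k
    rw [eulA_base]
    refine ⟨by split <;> norm_num, fun hk => by simp [Nat.pos_iff_ne_zero.mp hk]⟩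
  | succ m ih =>
    intro k
    match k with
    | 0 => exact ⟨by rw [eulA_zero]; norm_num, by omega⟩
    | k + 1 =>
      rw [eulA_step]
      rcases le_or_gt k m with h | h
      · have h1 := (ih (k+1)).1
        have h2 := (ih k).1
        have h3 : (0:ℤ) ≤ (m:ℤ) - k := by
          have : (k:ℤ) ≤ (m:ℤ) := by exact_mod_cast h
          omega
        refine ⟨?_, by omega⟩
        have : (0:ℤ) ≤ ((k:ℤ) + 2) * eulerianA m (k + 1) := by positivity
        nlinarith [mul_nonneg h3 h2]
      · have h1 := (ih (k+1)).2 (by omega)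
        have h2 := (ih k).2 h
        rw [h1, h2]
        exact ⟨by simp, fun _ => by ring⟩

lemma sum_range_two_mul (N : ℕ) (f : ℕ → ℝ) :
    ∑ r ∈ Finset.range (2 * N), f r = ∑ u ∈ Finset.range N, (f (2 * u) + f (2 * u + 1)) := by
  induction N with
  | zero => simp
  | succ N ih =>
    have : 2 * (N + 1) = 2 * N + 1 + 1 := by ring
    rw [this, Finset.sum_range_succ, Finset.sum_range_succ, ih, Finset.sum_range_succ]
    ring

lemma diff_pow_eq (M N : ℕ) (hMN : M + 1 = 2 * N) (x : ℝ) :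
    (1 + x) ^ M - (1 - x) ^ M
      = 2 * ∑ u ∈ Finset.range N, (Nat.choose M (2 * u + 1) : ℝ) * x ^ (2 * u + 1) := by
  have h1 : (1 + x) ^ M = ∑ r ∈ Finset.range (M + 1), x ^ r * (Nat.choose M r : ℝ) := by
    rw [add_comm, add_pow]; simp
  have h2 : (1 - x) ^ M = ∑ r ∈ Finset.range (M + 1), (-x) ^ r * (Nat.choose M r : ℝ) := by
    rw [sub_eq_add_neg, add_comm, add_pow]; simp
  rw [h1, h2, ← Finset.sum_sub_distrib]
  rw [hMN, sum_range_two_mul N (fun r => x ^ r * (Nat.choose M r : ℝ) - (-x) ^ r * (Nat.choose M r : ℝ))]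
  rw [Finset.mul_sum]
  apply Finset.sum_congr rfl
  intro u _
  have he : (-x) ^ (2 * u) = x ^ (2 * u) := (Even.neg_pow ⟨u, by ring⟩ x)
  have ho : (-x) ^ (2 * u + 1) = -(x ^ (2 * u + 1)) := (Odd.neg_pow ⟨u, by ring⟩ x)
  rw [he, ho]
  ring

lemma gf_inner (n k : ℕ) (hk : k < n) (x : ℝ) :
    (2 * x) * ∑ t ∈ Finset.range n, ((innerSum n k t : ℤ) : ℝ) * x ^ (2 * t)
      = (1 - x ^ 2) ^ k *
        ((1 + x) ^ (2 * n - 2 * k - 1) - (1 - x) ^ (2 * n - 2 * k - 1)) := by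
  set M := 2 * n - 2 * k - 1 with hM
  have hMval : M + 1 = 2 * (n - k) := by omega
  -- cast innerSum
  have hcast : ∀ t, ((innerSum n k t : ℤ) : ℝ)
      = ∑ i ∈ Finset.range (k + 1),
          (if i ≤ t then (-1 : ℝ) ^ i * (Nat.choose k i) * (Nat.choose M (2 * (t - i) + 1)) else 0) := by
    intro t
    rw [innerSum]
    push_cast
    rfl
  -- the inner "H" sum
  set H : ℝ := ∑ u ∈ Finset.range n, (Nat.choose M (2 * u + 1) : ℝ) * x ^ (2 * u) with hH
  have main : ∑ t ∈ Finset.range n, ((innerSum n k t : ℤ) : ℝ) * x ^ (2 * t)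
      = (∑ i ∈ Finset.range (k + 1), (-1 : ℝ) ^ i * (Nat.choose k i) * x ^ (2 * i)) * H := by
    rw [Finset.sum_mul]
    simp only [hcast, Finset.sum_mul]
    rw [Finset.sum_comm]
    apply Finset.sum_congr rfl
    intro i hi
    rw [Finset.mem_range] at hi
    have hik : i ≤ k := Nat.lt_succ_iff.mp hi
    have hin : i ≤ n := le_of_lt (lt_of_le_of_lt hik hk)
    have step1 : ∑ t ∈ Finset.range n,
        (if i ≤ t then (-1 : ℝ) ^ i * (Nat.choose k i) * (Nat.choose M (2 * (t - i) + 1)) else 0) * x ^ (2 * t)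
        = ∑ t ∈ Finset.Ico i n,
            (-1 : ℝ) ^ i * (Nat.choose k i) * (Nat.choose M (2 * (t - i) + 1)) * x ^ (2 * t) := by
      rw [Finset.range_eq_Ico, ← Finset.sum_Ico_consecutive _ (Nat.zero_le i) hin]
      have hzero : ∑ t ∈ Finset.Ico 0 i,
          (if i ≤ t then (-1 : ℝ) ^ i * (Nat.choose k i) * (Nat.choose M (2 * (t - i) + 1)) else 0) * x ^ (2 * t) = 0 := by
        apply Finset.sum_eq_zero
        intro t ht
        rw [Finset.mem_Ico] at ht
        rw [if_neg (by omega)]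
        ring
      rw [hzero, zero_add]
      apply Finset.sum_congr rfl
      intro t ht
      rw [Finset.mem_Ico] at ht
      rw [if_pos ht.1]
    rw [step1, Finset.sum_Ico_eq_sum_range]
    have step2 : ∀ u ∈ Finset.range (n - i),
        (-1 : ℝ) ^ i * (Nat.choose k i) * (Nat.choose M (2 * (i + u - i) + 1)) * x ^ (2 * (i + u))
        = ((-1 : ℝ) ^ i * (Nat.choose k i) * x ^ (2 * i)) * ((Nat.choose M (2 * u + 1) : ℝ) * x ^ (2 * u)) := by
      intro u _
      have h1 : i + u - i = u := by omega
      have h2 : 2 * (i + u) = 2 * i + 2 * u := by ring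
      rw [h1, h2, pow_add]
      ring
    rw [Finset.sum_congr rfl step2, ← Finset.mul_sum]
    congr 1
    rw [hH]
    apply Finset.sum_subset (Finset.range_subset_range.mpr (by omega))
    intro u _ hu
    rw [Finset.mem_range, not_lt] at hu
    have : Nat.choose M (2 * u + 1) = 0 := Nat.choose_eq_zero_of_lt (by omega)
    rw [this]
    norm_num
  rw [main]
  have hbinom : ∑ i ∈ Finset.range (k + 1), (-1 : ℝ) ^ i * (Nat.choose k i) * x ^ (2 * i)
      = (1 - x ^ 2) ^ k := by
    have h := add_pow (-(x ^ 2)) 1 k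
    rw [neg_add_eq_sub] at h
    rw [h]
    apply Finset.sum_congr rfl
    intro i _
    rw [neg_pow, pow_mul]
    ring
  have hxH : (2 * x) * H = (1 + x) ^ M - (1 - x) ^ M := by
    rw [diff_pow_eq M (n - k) hMval x]
    have hext : ∑ u ∈ Finset.range (n - k), (Nat.choose M (2 * u + 1) : ℝ) * x ^ (2 * u + 1)
        = ∑ u ∈ Finset.range n, (Nat.choose M (2 * u + 1) : ℝ) * x ^ (2 * u + 1) := by
      apply Finset.sum_subset (Finset.range_subset_range.mpr (by omega))
      intro u _ hu
      rw [Finset.mem_range, not_lt] at hu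
      rw [Nat.choose_eq_zero_of_lt (by omega)]
      norm_num
    rw [hext, hH, Finset.mul_sum, Finset.mul_sum]
    apply Finset.sum_congr rfl
    intro u _
    rw [pow_succ]
    ring
  rw [hbinom]
  calc (2 * x) * ((1 - x ^ 2) ^ k * H) = (1 - x ^ 2) ^ k * ((2 * x) * H) := by ring
    _ = _ := by rw [hxH]

lemma key_pos (n : ℕ) (hn : 1 ≤ n) (E : ℕ → ℤ) (hE : ∀ k, 0 ≤ E k) (hE0 : E 0 = 1)
    (x : ℝ) (hx : 1 < x) :
    0 < ∑ t ∈ Finset.range n,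
        ((∑ k ∈ Finset.range n, E k * (-1) ^ k * innerSum n k t : ℤ) : ℝ) * x ^ (2 * t) := by
  have hx0 : (0 : ℝ) < 2 * x := by linarith
  set S : ℝ := ∑ t ∈ Finset.range n,
      ((∑ k ∈ Finset.range n, E k * (-1) ^ k * innerSum n k t : ℤ) : ℝ) * x ^ (2 * t) with hS
  have hmain : (2 * x) * S
      = ∑ k ∈ Finset.range n, (E k : ℝ) *
          ((x ^ 2 - 1) ^ k *
            ((1 + x) ^ (2 * n - 2 * k - 1) + (x - 1) ^ (2 * n - 2 * k - 1))) := by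
    have h1 : S = ∑ k ∈ Finset.range n, (E k : ℝ) * (-1) ^ k *
        ∑ t ∈ Finset.range n, ((innerSum n k t : ℤ) : ℝ) * x ^ (2 * t) := by
      rw [hS]
      have : ∀ t ∈ Finset.range n,
          ((∑ k ∈ Finset.range n, E k * (-1) ^ k * innerSum n k t : ℤ) : ℝ) * x ^ (2 * t)
          = ∑ k ∈ Finset.range n, (E k : ℝ) * (-1) ^ k * (((innerSum n k t : ℤ) : ℝ) * x ^ (2 * t)) := by
        intro t _
        push_cast
        rw [Finset.sum_mul]
        apply Finset.sum_congr rfl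
        intro k _
        ring
      rw [Finset.sum_congr rfl this, Finset.sum_comm]
      apply Finset.sum_congr rfl
      intro k _
      rw [Finset.mul_sum]
    rw [h1, Finset.mul_sum]
    apply Finset.sum_congr rfl
    intro k hk
    rw [Finset.mem_range] at hk
    have hM : Odd (2 * n - 2 * k - 1) := ⟨n - k - 1, by omega⟩
    have hgf := gf_inner n k hk x
    calc (2 * x) * ((E k : ℝ) * (-1) ^ k *
          ∑ t ∈ Finset.range n, ((innerSum n k t : ℤ) : ℝ) * x ^ (2 * t))
        = (E k : ℝ) * (-1) ^ k *
            ((2 * x) * ∑ t ∈ Finset.range n, ((innerSum n k t : ℤ) : ℝ) * x ^ (2 * t)) := by ring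
      _ = (E k : ℝ) * (-1) ^ k * ((1 - x ^ 2) ^ k *
            ((1 + x) ^ (2 * n - 2 * k - 1) - (1 - x) ^ (2 * n - 2 * k - 1))) := by rw [hgf]
      _ = _ := by
          have e1 : ((-1 : ℝ)) ^ k * (1 - x ^ 2) ^ k = (x ^ 2 - 1) ^ k := by
            rw [← mul_pow]
            congr 1
            ring
          have e2 : (1 - x) ^ (2 * n - 2 * k - 1) = -((x - 1) ^ (2 * n - 2 * k - 1)) := by
            rw [show (1 - x : ℝ) = -(x - 1) by ring, hM.neg_pow]
          rw [e2]
          calc (E k : ℝ) * (-1) ^ k * ((1 - x ^ 2) ^ k *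
                ((1 + x) ^ (2 * n - 2 * k - 1) - -((x - 1) ^ (2 * n - 2 * k - 1))))
              = (E k : ℝ) * (((-1 : ℝ)) ^ k * (1 - x ^ 2) ^ k) *
                ((1 + x) ^ (2 * n - 2 * k - 1) + (x - 1) ^ (2 * n - 2 * k - 1)) := by ring
            _ = _ := by rw [e1]; ring
  have hpos : 0 < (2 * x) * S := by
    rw [hmain]
    apply Finset.sum_pos'
    · intro k _
      have h1 : (0 : ℝ) ≤ (E k : ℝ) := by exact_mod_cast hE k
      have h2 : (0 : ℝ) ≤ (x ^ 2 - 1) ^ k := pow_nonneg (by nlinarith) k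
      have h3 : (0 : ℝ) ≤ (1 + x) ^ (2 * n - 2 * k - 1) + (x - 1) ^ (2 * n - 2 * k - 1) := by
        have ha : (0:ℝ) ≤ (1 + x) ^ (2 * n - 2 * k - 1) := pow_nonneg (by linarith) _
        have hb : (0:ℝ) ≤ (x - 1) ^ (2 * n - 2 * k - 1) := pow_nonneg (by linarith) _
        linarith
      positivity
    · refine ⟨0, Finset.mem_range.mpr (by omega), ?_⟩
      rw [hE0]
      have h1 : (0:ℝ) < (1 + x) ^ (2 * n - 2 * 0 - 1) := pow_pos (by linarith) _
      have h2 : (0:ℝ) < (x - 1) ^ (2 * n - 2 * 0 - 1) := pow_pos (by linarith) _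
      push_cast
      simp only [pow_zero]
      nlinarith
  by_contra hP
  push_neg at hP
  have : (2 * x) * S ≤ 0 := mul_nonpos_of_nonneg_of_nonpos (le_of_lt hx0) hP
  linarith

lemma eulB_nonneg_van (m : ℕ) : ∀ k, 0 ≤ eulerianB m k ∧ (m < k → eulerianB m k = 0) := by
  induction m with
  | zero =>
    intro k
    rw [eulB_base]
    refine ⟨by split <;> norm_num, fun hk => by simp [Nat.pos_iff_ne_zero.mp hk]⟩
  | succ m ih =>
    intro k
    match k with
    | 0 => exact ⟨by rw [eulB_zero]; norm_num, by omega⟩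
    | k + 1 =>
      rw [eulB_step]
      rcases le_or_gt k m with h | h
      · have h1 := (ih (k+1)).1
        have h2 := (ih k).1
        have h3 : (0:ℤ) ≤ 2*(m:ℤ) + 1 - 2*k := by
          have : (k:ℤ) ≤ (m:ℤ) := by exact_mod_cast h
          omega
        refine ⟨?_, by omega⟩
        have : (0:ℤ) ≤ (2*(k:ℤ) + 3) * eulerianB m (k + 1) := by positivity
        nlinarith [mul_nonneg h3 h2]
      · have h1 := (ih (k+1)).2 (by omega)
        have h2 := (ih k).2 h
        rw [h1, h2]
        exact ⟨by simp, fun _ => by ring⟩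

theorem positivity_beyond_one (n : ℕ) (hn : 1 ≤ n) :
    (∀ x : ℝ, 1 < x → 0 < (-1 : ℝ) ^ (n + 1) * Xi n x ∧
      0 < (-1 : ℝ) ^ (n + 1) * Lam n x) ∧
    (∀ x : ℝ, 1 < |x| → Xi n x ≠ 0 ∧ Lam n x ≠ 0) := by
  have hEB : ∀ k, 0 ≤ eulerianB (2 * n - 1) k := fun k => (eulB_nonneg_van (2 * n - 1) k).1
  have hEA : ∀ k, 0 ≤ eulerianA (2 * n) k := fun k => (eulA_nonneg_van (2 * n) k).1
  have hPB : ∀ x : ℝ, 1 < x → 0 < ∑ t ∈ Finset.range n, (CB n t : ℝ) * x ^ (2 * t) := by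
    intro x hx
    have h := key_pos n hn (fun k => eulerianB (2 * n - 1) k) hEB (eulB_zero _) x hx
    simpa [CB] using h
  have hPA : ∀ x : ℝ, 1 < x → 0 < ∑ t ∈ Finset.range n, (CA n t : ℝ) * x ^ (2 * t) := by
    intro x hx
    have h := key_pos n hn (fun k => eulerianA (2 * n) k) hEA (eulA_zero _) x hx
    simpa [CA] using h
  have hfac1 : (0:ℝ) < 2 ^ (4 * n - 2) * (Nat.factorial (2 * n - 1) : ℝ) := by positivity
  have hfac2 : (0:ℝ) < ((2:ℝ) ^ (2 * n + 1) - 1) * (Nat.factorial (2 * n) : ℝ) := by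
    have h1 : (1:ℝ) < 2 ^ (2 * n + 1) := one_lt_pow₀ (by norm_num) (by omega)
    have h2 : (0:ℝ) < (Nat.factorial (2 * n) : ℝ) := by positivity
    nlinarith
  have hsq : ((-1:ℝ) ^ (n + 1)) * ((-1:ℝ) ^ (n + 1)) = 1 := by
    rw [← pow_add]
    exact Even.neg_one_pow ⟨n + 1, by ring⟩
  have part1 : ∀ x : ℝ, 1 < x → 0 < (-1 : ℝ) ^ (n + 1) * Xi n x ∧
      0 < (-1 : ℝ) ^ (n + 1) * Lam n x := by
    intro x hx
    constructor
    · rw [Xi]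
      have : (-1 : ℝ) ^ (n + 1) *
          (((-1 : ℝ) ^ (n + 1) / (2 ^ (4 * n - 2) * (Nat.factorial (2 * n - 1)))) *
            ∑ t ∈ Finset.range n, (CB n t : ℝ) * x ^ (2 * t))
          = (((-1:ℝ) ^ (n + 1)) * ((-1:ℝ) ^ (n + 1))) *
            ((∑ t ∈ Finset.range n, (CB n t : ℝ) * x ^ (2 * t)) /
              (2 ^ (4 * n - 2) * (Nat.factorial (2 * n - 1)))) := by ring
      rw [this, hsq, one_mul]
      exact div_pos (hPB x hx) hfac1
    · rw [Lam]
      have : (-1 : ℝ) ^ (n + 1) *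
          ((2 * (-1 : ℝ) ^ (n + 1) / ((2 ^ (2 * n + 1) - 1) * (Nat.factorial (2 * n)))) *
            ∑ t ∈ Finset.range n, (CA n t : ℝ) * x ^ (2 * t))
          = (((-1:ℝ) ^ (n + 1)) * ((-1:ℝ) ^ (n + 1))) *
            ((2 * ∑ t ∈ Finset.range n, (CA n t : ℝ) * x ^ (2 * t)) /
              ((2 ^ (2 * n + 1) - 1) * (Nat.factorial (2 * n)))) := by ring
      rw [this, hsq, one_mul]
      have := hPA x hx
      exact div_pos (by linarith) hfac2
  refine ⟨part1, ?_⟩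
  intro x hx
  have hXi : Xi n x = Xi n |x| := by
    rw [Xi, Xi]
    congr 1
    apply Finset.sum_congr rfl
    intro t _
    rw [pow_mul, pow_mul, sq_abs]
  have hLam : Lam n x = Lam n |x| := by
    rw [Lam, Lam]
    congr 1
    apply Finset.sum_congr rfl
    intro t _
    rw [pow_mul, pow_mul, sq_abs]
  obtain ⟨h1, h2⟩ := part1 |x| hx
  constructor
  · intro h0
    rw [hXi] at h0
    rw [h0, mul_zero] at h1
    exact lt_irrefl 0 h1
  · intro h0
    rw [hLam] at h0
    rw [h0, mul_zero] at h2
    exact lt_irrefl 0 h2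
end

section
/- For every m ∈ ℕ and every real z with 0 < |z| < 1, the imaginary part of the polylogarithm of negative order satisfies Im(Li_{−m}(iz))/z = (1/(1+z²)^{m+1}) · Σ_{r=0}^{m} ⟨m,r⟩^B (−z²)^r, where Li_{−m}(w) = Σ_{k=1}^∞ k^m w^k for complex |w| < 1. -/
open Finset

/-- The polylogarithm of negative integer order −m: Li_{−m}(w) = Σ_{k≥1} k^m w^k. -/
noncomputable def negPolylog (m : ℕ) (w : ℂ) : ℂ :=
  ∑' k : ℕ, ((k : ℂ) + 1) ^ m * w ^ (k + 1)

open fwdDiff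

lemma fwdDiff_iter_zero_fun (n : ℕ) : (Δ_[(1:ℕ)])^[n] (0 : ℕ → ℝ) = 0 := by
  induction n with
  | zero => rfl
  | succ n ih =>
      rw [Function.iterate_succ_apply]
      have : Δ_[(1:ℕ)] (0 : ℕ → ℝ) = 0 := by funext t; simp [fwdDiff]
      rw [this, ih]

lemma fwdDiff_pow_eq_zero (k : ℕ) : ∀ n, k < n → (Δ_[(1:ℕ)])^[n] (fun t : ℕ ↦ ((t : ℝ)) ^ k) = 0 := by
  induction k using Nat.strong_induction_on with
  | _ k IH =>
    intro n hn
    obtain ⟨n, rfl⟩ : ∃ n', n = n' + 1 := ⟨n - 1, by omega⟩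
    rw [Function.iterate_succ_apply]
    have hΔ : Δ_[(1:ℕ)] (fun t : ℕ ↦ ((t : ℝ)) ^ k)
        = ∑ i ∈ range k, (k.choose i : ℝ) • (fun t : ℕ ↦ ((t : ℝ)) ^ i) := by
      funext t
      simp only [fwdDiff, Finset.sum_apply, Pi.smul_apply, smul_eq_mul]
      push_cast
      rw [add_pow]
      rw [Finset.sum_range_succ]
      simp [mul_comm]
    rw [hΔ, fwdDiff_iter_finset_sum]
    rw [Finset.sum_eq_zero]
    intro i hi
    have hik := mem_range.mp hi
    rw [fwdDiff_iter_const_smul, IH i hik n (by omega)]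
    simp

lemma fwdDiff_oddpow_eq_zero (m : ℕ) :
    (Δ_[(1:ℕ)])^[m+1] (fun t : ℕ ↦ (((2 * t + 1 : ℕ) : ℝ)) ^ m) = 0 := by
  have hf : (fun t : ℕ ↦ (((2 * t + 1 : ℕ) : ℝ)) ^ m)
      = ∑ i ∈ range (m + 1), ((m.choose i : ℝ) * 2 ^ i) • (fun t : ℕ ↦ ((t : ℝ)) ^ i) := by
    funext t
    simp only [Finset.sum_apply, Pi.smul_apply, smul_eq_mul]
    push_cast
    rw [add_pow]
    refine Finset.sum_congr rfl fun i hi ↦ ?_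
    ring
  rw [hf, fwdDiff_iter_finset_sum, Finset.sum_eq_zero]
  intro i hi
  rw [fwdDiff_iter_const_smul, fwdDiff_pow_eq_zero i (m+1) (mem_range.mp hi)]
  simp

lemma key_diff (m N : ℕ) (hN : m + 1 ≤ N) :
    ∑ j ∈ range (m + 2), (-1 : ℝ) ^ j * ((m+1).choose j : ℝ) * (((2 * (N - j) + 1 : ℕ) : ℝ)) ^ m
      = 0 := by
  have h1 := fwdDiff_iter_eq_sum_shift (1:ℕ)
      (fun t : ℕ ↦ (((2 * t + 1 : ℕ) : ℝ)) ^ m) (m+1) (N - (m+1))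
  rw [funext_iff.mp (fwdDiff_oddpow_eq_zero m) (N - (m+1))] at h1
  rw [← Finset.sum_range_reflect]
  have : ∀ j ∈ range (m + 2),
      (-1 : ℝ) ^ (m + 2 - 1 - j) * ((m+1).choose (m + 2 - 1 - j) : ℝ)
        * (((2 * (N - (m + 2 - 1 - j)) + 1 : ℕ) : ℝ)) ^ m
      = ((-1 : ℤ) ^ (m + 1 - j) * ((m+1).choose j : ℤ))
          • (fun t : ℕ ↦ (((2 * t + 1 : ℕ) : ℝ)) ^ m) (N - (m+1) + j • 1) := by
    intro j hj
    have hj' : j < m + 2 := mem_range.mp hj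
    have e1 : m + 2 - 1 - j = m + 1 - j := by omega
    have e2 : (m+1).choose (m + 1 - j) = (m+1).choose j := Nat.choose_symm (by omega)
    have e3 : N - (m + 1 - j) = N - (m+1) + j • 1 := by simp only [smul_eq_mul, mul_one]; omega
    rw [e1, e2, e3, zsmul_eq_mul]
    push_cast
    ring
  rw [Finset.sum_congr rfl this]
  simpa using h1.symm

lemma summable_odd_pow_mul (m : ℕ) {x : ℝ} (hx : |x| < 1) :
    Summable (fun n : ℕ ↦ (((2 * n + 1 : ℕ) : ℝ)) ^ m * x ^ n) := by
  have h1 : Summable (fun n : ℕ ↦ (4:ℝ)^m * ((n:ℝ)^m * |x|^n) + 2^m * |x|^n) := by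
    refine Summable.add (Summable.mul_left _ ?_) (Summable.mul_left _ ?_)
    · exact summable_pow_mul_geometric_of_norm_lt_one m (by simpa using hx)
    · exact summable_geometric_of_lt_one (abs_nonneg x) hx
  refine Summable.of_norm_bounded h1 fun n ↦ ?_
  rw [norm_mul, norm_pow, norm_pow, Real.norm_eq_abs, Real.norm_eq_abs]
  rcases Nat.eq_zero_or_pos n with h0 | h1
  · subst h0
    simp only [Nat.mul_zero, Nat.zero_add, Nat.cast_one, abs_one, one_pow, pow_zero, mul_one]
    have h2 : (1:ℝ) ≤ 2^m := one_le_pow₀ (by norm_num)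
    have h3 : (0:ℝ) ≤ 4 ^ m * (((0:ℕ):ℝ) ^ m * 1) := by positivity
    linarith
  · have hb : |(((2 * n + 1 : ℕ) : ℝ))| ≤ 4 * n := by
      rw [abs_of_nonneg (by positivity)]
      push_cast
      have : (1:ℝ) ≤ (n:ℝ) := by exact_mod_cast h1
      nlinarith
    calc |(((2 * n + 1 : ℕ) : ℝ))| ^ m * |x| ^ n ≤ (4 * n) ^ m * |x| ^ n := by
          gcongr
    _ = 4 ^ m * ((n:ℝ)^m * |x|^n) := by ring
    _ ≤ _ := by
          have : (0:ℝ) ≤ 2^m * |x|^n := by positivity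
          linarith

lemma stepB (m : ℕ) {x : ℝ} (hx : |x| < 1) :
    (∑' n : ℕ, (((2 * n + 1 : ℕ) : ℝ)) ^ m * x ^ n) * (1 - x) ^ (m + 1)
      = ∑ r ∈ range (m + 1), (eulerianB m r : ℝ) * x ^ r := by
  have hS := summable_odd_pow_mul m hx
  set T : ℝ := ∑' n : ℕ, (((2 * n + 1 : ℕ) : ℝ)) ^ m * x ^ n with hT
  set u : ℕ → ℕ → ℝ := fun j N ↦
    if j ≤ N then (((2 * (N - j) + 1 : ℕ) : ℝ)) ^ m * x ^ N else 0 with hu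
  have hu_s : ∀ j, Summable (u j) := by
    intro j
    refine Summable.of_norm_bounded (g := fun N : ℕ ↦ (((2 * N + 1 : ℕ) : ℝ)) ^ m * |x| ^ N)
      (summable_odd_pow_mul m (x := |x|) (by simpa using hx)) fun N ↦ ?_
    by_cases h : j ≤ N
    · simp only [hu, if_pos h, norm_mul, norm_pow, Real.norm_eq_abs]
      rw [abs_of_nonneg (by positivity : (0:ℝ) ≤ (((2 * (N - j) + 1 : ℕ) : ℝ)))]
      gcongr <;> first
        | positivity
        | exact_mod_cast Nat.sub_le N j
    · simp only [hu, if_neg h, norm_zero]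
      positivity
  have key1 : ∀ j, T * x ^ j = ∑' N, u j N := by
    intro j
    have h2 : ∀ n, u j (n + j) = ((((2 * n + 1 : ℕ) : ℝ)) ^ m * x ^ n) * x ^ j := by
      intro n
      simp only [hu, if_pos (Nat.le_add_left j n), Nat.add_sub_cancel, pow_add, mul_assoc]
    have h3 := Summable.sum_add_tsum_nat_add (f := u j) j (hu_s j)
    rw [Finset.sum_eq_zero (fun i hi ↦ by
      have hij := mem_range.mp hi
      simp only [hu]
      rw [if_neg (by omega)]), zero_add] at h3
    rw [← h3, tsum_congr h2, tsum_mul_right]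
  have expand : (1 - x) ^ (m + 1)
      = ∑ j ∈ range (m + 2), (-x) ^ j * 1 ^ (m + 1 - j) * ((m+1).choose j : ℝ) := by
    rw [sub_eq_add_neg, add_comm, add_pow]
  rw [expand, Finset.mul_sum]
  have term_eq : ∀ j ∈ range (m + 2),
      T * ((-x) ^ j * 1 ^ (m + 1 - j) * ((m+1).choose j : ℝ))
        = ∑' N, ((-1:ℝ) ^ j * ((m+1).choose j : ℝ)) * u j N := by
    intro j hj
    rw [tsum_mul_left, ← key1 j]
    rw [neg_pow]
    ring
  rw [Finset.sum_congr rfl term_eq, ← Summable.tsum_finsetSum (fun j _ ↦ (hu_s j).mul_left _)]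
  have vanish : ∀ N ∉ range (m + 1),
      ∑ j ∈ range (m + 2), ((-1:ℝ) ^ j * ((m+1).choose j : ℝ)) * u j N = 0 := by
    intro N hN
    have hN' : m + 1 ≤ N := by simpa using hN
    have : ∀ j ∈ range (m + 2),
        ((-1:ℝ) ^ j * ((m+1).choose j : ℝ)) * u j N
          = ((-1:ℝ) ^ j * ((m+1).choose j : ℝ) * (((2 * (N - j) + 1 : ℕ) : ℝ)) ^ m) * x ^ N := by
      intro j hj
      have : j ≤ N := by
        have := mem_range.mp hj; omega
      simp only [hu, if_pos this]
      ring
    rw [Finset.sum_congr rfl this, ← Finset.sum_mul, key_diff m N hN', zero_mul]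
  rw [tsum_eq_sum vanish]
  refine Finset.sum_congr rfl fun N hN ↦ ?_
  have hNm : N < m + 1 := mem_range.mp hN
  rw [← Finset.sum_subset (Finset.range_subset_range.2 (by omega : N + 1 ≤ m + 2))
    (fun j hj hj' ↦ by
      simp only [hu, if_neg (by simp only [mem_range] at hj hj' ⊢; omega : ¬ j ≤ N), mul_zero])]
  have : ∀ j ∈ range (N + 1),
      ((-1:ℝ) ^ j * ((m+1).choose j : ℝ)) * u j N
        = ((-1:ℝ) ^ j * ((m+1).choose j : ℝ) * (((2 * (N - j) + 1 : ℕ)) ^ m : ℝ)) * x ^ N := by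
    intro j hj
    have : j ≤ N := by have := mem_range.mp hj; omega
    simp only [hu, if_pos this]
    push_cast
    ring
  rw [Finset.sum_congr rfl this, ← Finset.sum_mul]
  congr 1
  rw [eulerianB]
  push_cast
  rfl

set_option maxHeartbeats 1000000 in
theorem im_negPolylog_eq (m : ℕ) (z : ℝ) (hz0 : 0 < |z|) (hz1 : |z| < 1) :
    (negPolylog m (Complex.I * z)).im / z =
      (1 / (1 + z ^ 2) ^ (m + 1)) *
        ∑ r ∈ Finset.range (m + 1), (eulerianB m r : ℝ) * (-z ^ 2) ^ r := by
  have hz : z ≠ 0 := abs_pos.mp hz0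
  set x : ℝ := -z ^ 2 with hxdef
  have hx : |x| < 1 := by
    rw [hxdef, abs_neg, abs_of_nonneg (sq_nonneg z)]
    calc z ^ 2 = |z| ^ 2 := (sq_abs z).symm
    _ < 1 := pow_lt_one₀ (abs_nonneg z) hz1 two_ne_zero
  -- the complex summand
  set f : ℕ → ℂ := fun k ↦ ((k : ℂ) + 1) ^ m * (Complex.I * z) ^ (k + 1) with hf
  have hnorm : ∀ k : ℕ, ‖f k‖ = (((k : ℝ) + 1) ^ m * |z| ^ (k + 1)) := by
    intro k
    have h1 : ((k : ℂ) + 1) = (((k + 1 : ℕ) : ℝ) : ℂ) := by push_cast; ring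
    rw [hf]
    simp only [h1, norm_mul, norm_pow, Complex.norm_real, Complex.norm_I, Real.norm_eq_abs]
    rw [abs_of_nonneg (by positivity : (0:ℝ) ≤ ((k + 1 : ℕ) : ℝ))]
    push_cast
    ring
  have hsumnorm : Summable fun k : ℕ ↦ ((k : ℝ) + 1) ^ m * |z| ^ (k + 1) := by
    have h := (summable_nat_add_iff 1).2
      (summable_pow_mul_geometric_of_norm_lt_one (R := ℝ) m (r := |z|)
        (by rwa [Real.norm_eq_abs, abs_abs]))
    refine h.congr fun n ↦ ?_
    push_cast
    ring
  have hsum : Summable f := Summable.of_norm (by simpa only [hnorm] using hsumnorm)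
  -- imaginary parts
  have him : (negPolylog m (Complex.I * z)).im = ∑' k, (f k).im := by
    rw [negPolylog, Complex.im_tsum hsum]
  have hsq : (Complex.I * (z:ℂ)) ^ 2 = (((-z^2 : ℝ)) : ℂ) := by
    rw [mul_pow, Complex.I_sq]
    push_cast
    ring
  have hodd : ∀ j : ℕ, (f (2 * j + 1)).im = 0 := by
    intro j
    have : f (2 * j + 1) = (((((2 * j + 1 : ℕ) : ℝ) + 1) ^ m * (-z^2) ^ (j + 1) : ℝ) : ℂ) := by
      rw [hf]
      simp only []
      rw [show 2 * j + 1 + 1 = 2 * (j + 1) by ring, pow_mul, hsq]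
      push_cast
      ring
    rw [this, Complex.ofReal_im]
  have heven : ∀ j : ℕ, (f (2 * j)).im = z * ((((2 * j + 1 : ℕ) : ℝ)) ^ m * x ^ j) := by
    intro j
    have h2 : f (2 * j) = (((z * (((2 * j + 1 : ℕ) : ℝ)) ^ m * (-z^2) ^ j : ℝ)) : ℂ) * Complex.I := by
      rw [hf]
      simp only []
      rw [show 2 * j + 1 = 2 * j + 1 from rfl, pow_succ, pow_mul, hsq]
      push_cast
      ring
    rw [h2, Complex.mul_I_im, Complex.ofReal_re, hxdef]
    ring
  have hSe : Summable fun j : ℕ ↦ (f (2 * j)).im := by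
    refine ((summable_odd_pow_mul m hx).mul_left z).congr fun j ↦ ?_
    rw [heven j]
  have hSo : Summable fun j : ℕ ↦ (f (2 * j + 1)).im := by
    refine summable_zero.congr fun j ↦ ?_
    rw [hodd j]
  have htsum : ∑' k, (f k).im = z * ∑' j : ℕ, (((2 * j + 1 : ℕ) : ℝ)) ^ m * x ^ j := by
    rw [← tsum_even_add_odd hSe hSo]
    rw [tsum_congr hodd, tsum_zero, add_zero, tsum_congr heven, tsum_mul_left]
  have h1x : (1 : ℝ) + z ^ 2 = 1 - x := by rw [hxdef]; ring
  have hne : ((1 : ℝ) - x) ^ (m + 1) ≠ 0 := by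
    have : (0:ℝ) < 1 - x := by rw [← h1x]; positivity
    positivity
  rw [him, htsum, mul_comm z _, mul_div_assoc, div_self hz, mul_one]
  rw [h1x, ← stepB m hx]
  field_simp
end
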